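/- arXiv:1408.3706 — 12 statements merged into one kernel-verified Lean document; each statement's English description precedes it below -/
import Mathlib

section
/- Let A be a finite-dimensional associative unital ℝ-algebra of dimension N ≥ 1, let τ(u) denote the trace of the ℝ-linear map v ↦ uv on A, let g := {u ∈ A : τ(u) = 0}, and for X, Y ∈ g set ∇_X Y := XY − (τ(XY)/N)·1 and γ(X,Y) := −τ(XY)/N. Then for all X, Y, Z ∈ g the curvature R(X,Y)Z := ∇_X(∇_Y Z) − ∇_Y(∇_X Z) − ∇_{[X,Y]}Z satisfies R(X,Y)Z = γ(Y,Z)·X − γ(X,Z)·Y. -/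
/-- For a finite-dimensional associative unital ℝ-algebra `A` of dimension
`N ≥ 1`, with `τ u` the trace of left multiplication by `u`, the product
`∇_X Y := XY − (τ(XY)/N)·1` on `g = ker τ` has curvature
`R(X,Y)Z = γ(Y,Z)·X − γ(X,Z)·Y` where `γ(X,Y) = −τ(XY)/N`. -/
theorem curvature_of_trace_connection
    (A : Type*) [Ring A] [Algebra ℝ A] [FiniteDimensional ℝ A]
    (N : ℕ) (hN : N = Module.finrank ℝ A) (hN1 : 1 ≤ N)
    (τ : A → ℝ) (hτ : ∀ u, τ u = LinearMap.trace ℝ A (LinearMap.mulLeft ℝ u))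
    (nab : A → A → A)
    (hnab : ∀ X Y, nab X Y = X * Y - (τ (X * Y) / (N : ℝ)) • (1 : A))
    (γ : A → A → ℝ) (hγ : ∀ X Y, γ X Y = -(τ (X * Y)) / (N : ℝ))
    (X Y Z : A) (hX : τ X = 0) (hY : τ Y = 0) (hZ : τ Z = 0) :
    nab X (nab Y Z) - nab Y (nab X Z) - nab (X * Y - Y * X) Z
      = γ Y Z • X - γ X Z • Y := by
  have hNne : (N : ℝ) ≠ 0 := by positivity
  have hkey : ∀ u, LinearMap.mulLeft ℝ u = LinearMap.mul ℝ A u := by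
    intro u; ext v; simp
  set L : A →ₗ[ℝ] ℝ := (LinearMap.trace ℝ A).comp (LinearMap.mul ℝ A) with hL
  have hτ' : ∀ u, τ u = L u := by intro u; rw [hτ, hkey]; rfl
  have hτ1 : τ 1 = N := by
    rw [hτ, LinearMap.mulLeft_one]
    have : (LinearMap.id : A →ₗ[ℝ] A) = 1 := rfl
    rw [this, LinearMap.trace_one, ← hN]
  have hsub : ∀ u v, τ (u - v) = τ u - τ v := by intro u v; simp [hτ', map_sub]
  have hsmul : ∀ (r : ℝ) (u : A), τ (r • u) = r * τ u := by
    intro r u; simp [hτ', map_smul]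
  -- expand
  rw [hnab, hnab, hnab, hnab, hnab, hγ, hγ]
  have e1 : X * (Y * Z - (τ (Y * Z) / (N:ℝ)) • (1:A)) = X * (Y * Z) - (τ (Y * Z) / N) • X := by
    rw [mul_sub, mul_smul_comm, mul_one]
  have e2 : Y * (X * Z - (τ (X * Z) / (N:ℝ)) • (1:A)) = Y * (X * Z) - (τ (X * Z) / N) • Y := by
    rw [mul_sub, mul_smul_comm, mul_one]
  rw [e1, e2]
  have t1 : τ (X * (Y * Z) - (τ (Y * Z) / N) • X) = τ (X * (Y * Z)) := by
    rw [hsub, hsmul, hX]; ring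
  have t2 : τ (Y * (X * Z) - (τ (X * Z) / N) • Y) = τ (Y * (X * Z)) := by
    rw [hsub, hsmul, hY]; ring
  have t3 : τ ((X * Y - Y * X) * Z) = τ (X * (Y * Z)) - τ (Y * (X * Z)) := by
    rw [sub_mul, hsub, mul_assoc, mul_assoc]
  rw [t1, t2, t3, sub_mul, mul_assoc, mul_assoc]
  have hsm : ∀ (a b : ℝ) (u : A), a • u - b • u = (a - b) • u := by
    intro a b u; rw [sub_smul]
  match_scalars <;> field_simp <;> ring
end

section
/- Let A be a finite-dimensional associative unital ℝ-algebra of dimension N ≥ 2, τ the trace of left multiplication, g := ker τ, ∇_X Y := XY − (τ(XY)/N)·1, and R the curvature of ∇. Then for all X, Y ∈ g the linear map Z ↦ R(Z,X)Y maps g into g, and the Ricci tensor Ric(X,Y) := tr_g(Z ↦ R(Z,X)Y) equals −((N−2)/N)·τ(XY); in particular Ric is symmetric. -/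
open LinearMap TensorProduct

lemma trace_smulRight_aux {M : Type*} [AddCommGroup M] [Module ℝ M]
    [Module.Finite ℝ M] [Module.Free ℝ M] (φ : M →ₗ[ℝ] ℝ) (x : M) :
    LinearMap.trace ℝ M (φ.smulRight x) = φ x := by
  have h : φ.smulRight x = dualTensorHom ℝ M M (φ ⊗ₜ x) := by
    ext m; simp [dualTensorHom_apply]
  rw [h, LinearMap.trace_eq_contract_apply, contractLeft_apply]

/-- For a finite-dimensional associative unital ℝ-algebra `A` of dimension
`N ≥ 2`, with `τ` the trace of left multiplication, `g = ker τ`, and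
`∇_X Y := XY − (τ(XY)/N)·1` with curvature `R`, for all `X, Y ∈ g` the map
`Z ↦ R(Z,X)Y` sends `g` into `g`, and its trace over `g` (the Ricci tensor) equals
`−((N−2)/N)·τ(XY)`; in particular the Ricci tensor is symmetric. -/
theorem ricci_of_trace_connection
    (A : Type*) [Ring A] [Algebra ℝ A] [FiniteDimensional ℝ A]
    (N : ℕ) (hN : N = Module.finrank ℝ A) (hN2 : 2 ≤ N)
    (τ : A →ₗ[ℝ] ℝ) (hτ : ∀ u, τ u = LinearMap.trace ℝ A (LinearMap.mulLeft ℝ u))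
    (g : Submodule ℝ A) (hg : g = LinearMap.ker τ)
    (nab : A → A → A)
    (hnab : ∀ X Y, nab X Y = X * Y - (τ (X * Y) / (N : ℝ)) • (1 : A))
    (R : A → A → A → A)
    (hR : ∀ X Y Z, R X Y Z
      = nab X (nab Y Z) - nab Y (nab X Z) - nab (X * Y - Y * X) Z)
    (X Y : A) (hX : X ∈ g) (hY : Y ∈ g) :
    (∀ Z ∈ g, R Z X Y ∈ g) ∧
    (∀ F : g →ₗ[ℝ] g, (∀ Z : g, (F Z : A) = R (Z : A) X Y) →
      LinearMap.trace ℝ g F = -(((N : ℝ) - 2) / (N : ℝ)) * τ (X * Y)) := by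
  have hN0 : (N : ℝ) ≠ 0 := by
    have : (0:ℕ) < N := by omega
    exact_mod_cast this.ne'
  have hτX : τ X = 0 := by rw [hg, LinearMap.mem_ker] at hX; exact hX
  have hτY : τ Y = 0 := by rw [hg, LinearMap.mem_ker] at hY; exact hY
  have key : ∀ Z : A, τ Z = 0 →
      R Z X Y = (τ (Z * Y) / (N : ℝ)) • X - (τ (X * Y) / (N : ℝ)) • Z := by
    intro Z hZ
    rw [hR, hnab, hnab, hnab, hnab, hnab]
    simp only [mul_sub, sub_mul, smul_mul_assoc, mul_smul_comm, mul_one, one_mul,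
      map_sub, map_smul, smul_eq_mul, hτX, hτY, hZ, mul_zero, sub_zero, zero_sub,
      mul_assoc]
    module
  constructor
  · intro Z hZg
    have hZ : τ Z = 0 := by rw [hg, LinearMap.mem_ker] at hZg; exact hZg
    rw [hg, LinearMap.mem_ker, key Z hZ]
    simp [hτX, hZ]
  · intro F hF
    -- finrank of g
    have hsurj : Function.Surjective τ := by
      intro c
      refine ⟨(c / (N : ℝ)) • 1, ?_⟩
      have hτ1 : τ (1 : A) = (N : ℝ) := by
        rw [hτ, LinearMap.mulLeft_one, LinearMap.trace_id, hN]
      rw [map_smul, hτ1, smul_eq_mul]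
      field_simp
    have hrank : (Module.finrank ℝ g : ℝ) = (N : ℝ) - 1 := by
      have h1 : Module.finrank ℝ (LinearMap.range τ) + Module.finrank ℝ (LinearMap.ker τ)
          = Module.finrank ℝ A := LinearMap.finrank_range_add_finrank_ker τ
      have h2 : LinearMap.range τ = ⊤ := LinearMap.range_eq_top.mpr hsurj
      rw [h2] at h1
      have h3 : Module.finrank ℝ (⊤ : Submodule ℝ ℝ) = 1 := by
        simp [finrank_top]
      rw [h3, ← hN] at h1
      have h4 : Module.finrank ℝ g = N - 1 := by
        rw [hg]; omega
      rw [h4]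
      have : (1:ℕ) ≤ N := by omega
      push_cast [Nat.cast_sub this]
      ring
    have hmem : ∀ z : A, z ∈ g → τ z = 0 := by
      intro z hz; rw [hg, LinearMap.mem_ker] at hz; exact hz
    set x0 : g := ⟨X, hX⟩ with hx0
    set φ : g →ₗ[ℝ] ℝ := ((N : ℝ)⁻¹ • (τ ∘ₗ LinearMap.mulRight ℝ Y)) ∘ₗ g.subtype with hφ
    have hFeq : F = φ.smulRight x0 - (τ (X * Y) / (N : ℝ)) • LinearMap.id := by
      ext Z
      have hZ : τ (Z : A) = 0 := hmem _ Z.2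
      have h := hF Z
      rw [key (Z : A) hZ] at h
      simp only [LinearMap.sub_apply, LinearMap.smul_apply, LinearMap.smulRight_apply,
        LinearMap.id_apply, Submodule.coe_sub, SetLike.val_smul, hφ, hx0,
        LinearMap.comp_apply, Submodule.coe_subtype, LinearMap.mulRight_apply,
        smul_eq_mul]
      rw [h]
      congr 1
      rw [div_eq_inv_mul]
    have hsub : LinearMap.trace ℝ g (φ.smulRight x0 - (τ (X * Y) / (N : ℝ)) • LinearMap.id)
        = LinearMap.trace ℝ g (φ.smulRight x0)
          - (τ (X * Y) / (N : ℝ)) • LinearMap.trace ℝ g LinearMap.id :=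
      (map_sub (LinearMap.trace ℝ g) _ _).trans (congrArg _ (map_smul (LinearMap.trace ℝ g) _ _))
    rw [hFeq, hsub, trace_smulRight_aux, LinearMap.trace_id, hrank]
    simp only [hφ, hx0, LinearMap.comp_apply, Submodule.coe_subtype, LinearMap.smul_apply,
      LinearMap.mulRight_apply, smul_eq_mul]
    field_simp
    ring
end

section
/- Let l be an n-dimensional real Lie algebra with n ≥ 2 and ∇ a torsion-free bilinear product on l. Define f : l → End_ℝ(l × ℝ) by f(X)(Z, t) := (∇_X Z − a_X·Z + t·X, −P(X,Z) − a_X·t), where a_X := tr(∇_X)/(n+1) is 1/(n+1) times the trace of the endomorphism Y ↦ ∇_X Y. Then f is a homomorphism of Lie algebras (where End_ℝ(l × ℝ) carries the commutator bracket) if and only if both (i) the Weyl projective curvature W vanishes identically and (ii) the Codazzi identity P(X, ∇_Y Z) − P(Y, ∇_X Z) − P([X,Y], Z) = 0 holds for all X, Y, Z ∈ l. -/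
noncomputable section

/-- The curvature `R(X,Y)Z` of a bilinear product `∇` on a Lie algebra. -/
def curv {l : Type*} [LieRing l] [LieAlgebra ℝ l]
    (nab : l →ₗ[ℝ] l →ₗ[ℝ] l) (X Y Z : l) : l :=
  nab X (nab Y Z) - nab Y (nab X Z) - nab ⁅X, Y⁆ Z

/-- The endomorphism `Z ↦ R(Z,X)Y`. -/
def ricMap {l : Type*} [LieRing l] [LieAlgebra ℝ l]
    (nab : l →ₗ[ℝ] l →ₗ[ℝ] l) (X Y : l) : l →ₗ[ℝ] l :=
  nab.flip (nab X Y) - (nab X) ∘ₗ (nab.flip Y)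
    + (nab.flip Y) ∘ₗ (LieAlgebra.ad ℝ l X)

/-- The Ricci tensor `Ric(X,Y) = tr(Z ↦ R(Z,X)Y)`. -/
def ric {l : Type*} [LieRing l] [LieAlgebra ℝ l]
    (nab : l →ₗ[ℝ] l →ₗ[ℝ] l) (X Y : l) : ℝ :=
  LinearMap.trace ℝ l (ricMap nab X Y)

/-- The tensor `P(X,Y) = (1/(n²−1))·(n·Ric(X,Y) + Ric(Y,X))` with `n = dim l`. -/
def pT {l : Type*} [LieRing l] [LieAlgebra ℝ l]
    (nab : l →ₗ[ℝ] l →ₗ[ℝ] l) (X Y : l) : ℝ :=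
  (1 / ((Module.finrank ℝ l : ℝ) ^ 2 - 1))
    * ((Module.finrank ℝ l : ℝ) * ric nab X Y + ric nab Y X)

/-- The Weyl projective curvature
`W(X,Y)Z = R(X,Y)Z + (P(X,Y) − P(Y,X))·Z − P(Y,Z)·X + P(X,Z)·Y`. -/
def weyl {l : Type*} [LieRing l] [LieAlgebra ℝ l]
    (nab : l →ₗ[ℝ] l →ₗ[ℝ] l) (X Y Z : l) : l :=
  curv nab X Y Z + (pT nab X Y - pT nab Y X) • Z - pT nab Y Z • X + pT nab X Z • Y

section Aux

set_option linter.unusedSectionVars false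

variable {l : Type*} [LieRing l] [LieAlgebra ℝ l] (nab : l →ₗ[ℝ] l →ₗ[ℝ] l)

lemma ricMap_apply (X Y W : l) :
    ricMap nab X Y W = nab W (nab X Y) - nab X (nab W Y) + nab ⁅X, W⁆ Y := by
  simp [ricMap, LieAlgebra.ad_apply]

lemma bianchi (tf : ∀ X Y : l, nab X Y - nab Y X = ⁅X, Y⁆) (X Y Z : l) :
    curv nab X Y Z + curv nab Y Z X + curv nab Z X Y = 0 := by
  have key2 : ∀ A B : l, nab A B = nab B A + ⁅A, B⁆ := by
    intro A B; rw [← tf A B]; abel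
  have key3 : ∀ A B : l, nab B A = nab A B - ⁅A, B⁆ := by
    intro A B; rw [← tf A B]; abel
  simp only [curv]
  rw [key2 Y Z, key2 Z X, key2 X Y, key3 Z ⁅X,Y⁆, key3 X ⁅Y,Z⁆, key3 Y ⁅Z,X⁆,
    map_add, map_add, map_add]
  linear_combination (norm := module) lie_jacobi X Y Z

lemma ricMap_eq_curv (X Y W : l) : ricMap nab X Y W = curv nab W X Y := by
  rw [ricMap_apply, curv, ← lie_skew X W]
  simp only [map_neg, LinearMap.neg_apply]
  abel

lemma curv_swap (X Y Z : l) : curv nab X Y Z = - curv nab Y X Z := by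
  simp only [curv]
  rw [← lie_skew X Y]
  simp only [map_neg, LinearMap.neg_apply]
  abel

lemma trace_bracket [FiniteDimensional ℝ l] (tf : ∀ X Y : l, nab X Y - nab Y X = ⁅X, Y⁆)
    (X Y : l) :
    LinearMap.trace ℝ l (nab ⁅X, Y⁆) = ric nab X Y - ric nab Y X := by
  have hmap : (nab X) ∘ₗ (nab Y) - (nab Y) ∘ₗ (nab X) - nab ⁅X, Y⁆
      = ricMap nab Y X - ricMap nab X Y := by
    ext Z
    simp only [LinearMap.sub_apply, LinearMap.comp_apply, ricMap_eq_curv]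
    have b := bianchi nab tf X Y Z
    have s : curv nab Z Y X = - curv nab Y Z X := curv_swap nab Z Y X ▸ rfl
    rw [show curv nab X Y Z = nab X (nab Y Z) - nab Y (nab X Z) - nab ⁅X,Y⁆ Z from rfl] at b
    linear_combination (norm := module) b - s
  have htr := congrArg (LinearMap.trace ℝ l) hmap
  rw [map_sub, map_sub, map_sub, LinearMap.trace_comp_comm' (nab Y) (nab X)] at htr
  unfold ric
  linarith [htr]

lemma ricMap_add_left (X X' Y : l) :
    ricMap nab (X + X') Y = ricMap nab X Y + ricMap nab X' Y := by
  ext W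
  simp only [ricMap_apply, map_add, LinearMap.add_apply, add_lie]
  abel

lemma ricMap_smul_left (c : ℝ) (X Y : l) :
    ricMap nab (c • X) Y = c • ricMap nab X Y := by
  ext W
  simp only [ricMap_apply, map_smul, LinearMap.smul_apply, smul_lie, smul_sub, smul_add]

lemma ricMap_add_right (X Y Y' : l) :
    ricMap nab X (Y + Y') = ricMap nab X Y + ricMap nab X Y' := by
  ext W
  simp only [ricMap_apply, map_add, LinearMap.add_apply]
  abel

lemma ricMap_smul_right (c : ℝ) (X Y : l) :
    ricMap nab X (c • Y) = c • ricMap nab X Y := by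
  ext W
  simp only [ricMap_apply, map_smul, LinearMap.smul_apply, smul_sub, smul_add]

variable [FiniteDimensional ℝ l]

lemma ric_add_left (X X' Y : l) : ric nab (X + X') Y = ric nab X Y + ric nab X' Y := by
  unfold ric; rw [ricMap_add_left, map_add]

lemma ric_smul_left (c : ℝ) (X Y : l) : ric nab (c • X) Y = c * ric nab X Y := by
  unfold ric; rw [ricMap_smul_left, map_smul, smul_eq_mul]

lemma ric_add_right (X Y Y' : l) : ric nab X (Y + Y') = ric nab X Y + ric nab X Y' := by
  unfold ric; rw [ricMap_add_right, map_add]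

lemma ric_smul_right (c : ℝ) (X Y : l) : ric nab X (c • Y) = c * ric nab X Y := by
  unfold ric; rw [ricMap_smul_right, map_smul, smul_eq_mul]

lemma pT_add₂ (X u v : l) : pT nab X (u + v) = pT nab X u + pT nab X v := by
  unfold pT; rw [ric_add_right, ric_add_left]; ring

lemma pT_smul₂ (c : ℝ) (X u : l) : pT nab X (c • u) = c * pT nab X u := by
  unfold pT; rw [ric_smul_right, ric_smul_left]; ring

lemma pT_sub₂ (X u v : l) : pT nab X (u - v) = pT nab X u - pT nab X v := by
  have h := pT_add₂ nab X (u - v) v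
  rw [sub_add_cancel] at h
  linarith

lemma a_bracket (hn : 2 ≤ Module.finrank ℝ l)
    (tf : ∀ X Y : l, nab X Y - nab Y X = ⁅X, Y⁆)
    (a : l → ℝ)
    (ha : ∀ X, a X = LinearMap.trace ℝ l (nab X) / ((Module.finrank ℝ l : ℝ) + 1))
    (X Y : l) : a ⁅X, Y⁆ = pT nab X Y - pT nab Y X := by
  have h := trace_bracket nab tf X Y
  rw [ha, h]
  unfold pT
  set n : ℝ := (Module.finrank ℝ l : ℝ) with hnn
  have hn2 : (2:ℝ) ≤ n := by rw [hnn]; exact_mod_cast hn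
  have h1 : n + 1 ≠ 0 := by linarith
  have h2 : n ^ 2 - 1 ≠ 0 := by nlinarith
  field_simp
  ring

end Aux

/-- With `f : l → End ℝ (l × ℝ)` given by
`f(X)(Z,t) = (∇_X Z − a_X·Z + t·X, −P(X,Z) − a_X·t)`, `a_X = tr(∇_X)/(n+1)`,
`f` is a Lie algebra homomorphism iff the Weyl projective curvature vanishes and
the Codazzi identity holds. -/
theorem p_homomorphism_iff_projectively_flat
    (l : Type*) [LieRing l] [LieAlgebra ℝ l]
    [FiniteDimensional ℝ l] (hn : 2 ≤ Module.finrank ℝ l)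
    (nab : l →ₗ[ℝ] l →ₗ[ℝ] l)
    (tf : ∀ X Y : l, nab X Y - nab Y X = ⁅X, Y⁆)
    (a : l → ℝ)
    (ha : ∀ X, a X = LinearMap.trace ℝ l (nab X) / ((Module.finrank ℝ l : ℝ) + 1))
    (f : l → Module.End ℝ (l × ℝ))
    (hf : ∀ (X Z : l) (t : ℝ),
      f X (Z, t) = (nab X Z - a X • Z + t • X, -(pT nab X Z) - a X * t)) :
    (∀ X Y : l, f ⁅X, Y⁆ = ⁅f X, f Y⁆) ↔
      ((∀ X Y Z : l, weyl nab X Y Z = 0) ∧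
       (∀ X Y Z : l, pT nab X (nab Y Z) - pT nab Y (nab X Z) - pT nab ⁅X, Y⁆ Z = 0)) := by
  have hbr := a_bracket nab hn tf a ha
  constructor
  · intro hhom
    constructor
    · intro X Y Z
      have h := DFunLike.congr_fun (hhom X Y) (Z, (0:ℝ))
      rw [LieRing.of_associative_ring_bracket, LinearMap.sub_apply, Module.End.mul_apply,
        Module.End.mul_apply, hf Y Z 0, hf X Z 0, hf X, hf Y, hf ⁅X,Y⁆ Z 0] at h
      have h1 := congrArg Prod.fst h
      simp only [Prod.fst_sub, smul_zero, zero_smul, mul_zero, add_zero, sub_zero,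
        map_sub, map_add, map_smul, hbr X Y] at h1
      simp only [weyl, curv]
      linear_combination (norm := module) -h1
    · intro X Y Z
      have h := DFunLike.congr_fun (hhom X Y) (Z, (0:ℝ))
      rw [LieRing.of_associative_ring_bracket, LinearMap.sub_apply, Module.End.mul_apply,
        Module.End.mul_apply, hf Y Z 0, hf X Z 0, hf X, hf Y, hf ⁅X,Y⁆ Z 0] at h
      have h2 := congrArg Prod.snd h
      simp only [Prod.snd_sub, smul_zero, zero_smul, mul_zero, add_zero, sub_zero,
        pT_sub₂, pT_smul₂, hbr X Y] at h2
      linarith [h2]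
  · rintro ⟨hw, hc⟩ X Y
    apply LinearMap.ext
    rintro ⟨Z, t⟩
    rw [LieRing.of_associative_ring_bracket, LinearMap.sub_apply, Module.End.mul_apply,
      Module.End.mul_apply, hf Y Z t, hf X Z t, hf X, hf Y, hf ⁅X,Y⁆ Z t]
    rw [Prod.ext_iff]
    constructor
    · have hcu := hw X Y Z
      simp only [weyl, curv] at hcu
      simp only [Prod.fst_sub, map_sub, map_add, map_smul, hbr X Y]
      linear_combination (norm := module) -hcu - t • tf X Y
    · have hco := hc X Y Z
      simp only [Prod.snd_sub, pT_sub₂, pT_smul₂, pT_add₂, hbr X Y]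
      linarith [hco]

end
end

section
/- Let l be an n-dimensional real Lie algebra with n ≥ 2 and ∇ a torsion-free bilinear product on l whose Weyl projective curvature W vanishes identically. Let s ⊆ l be an autoparallel Lie subalgebra of dimension m ≥ 2. Then for all X, Y ∈ s: Ric^s(X,Y) = (1/(n²−1))·((mn−1)·Ric(X,Y) + (m−n)·Ric(Y,X)) and P^s(X,Y) = P(X,Y), where Ric^s and P^s are the intrinsic Ricci tensor and P-tensor of the restricted product ∇|_s on s. -/
noncomputable section

lemma trace_smulRight' {M : Type*} [AddCommGroup M] [Module ℝ M]
    [FiniteDimensional ℝ M] (φ : M →ₗ[ℝ] ℝ) (v : M) :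
    LinearMap.trace ℝ M (φ.smulRight v) = φ v := by
  have h : φ.smulRight v = dualTensorHom ℝ M M (φ ⊗ₜ v) := by
    ext m; simp [dualTensorHom_apply]
  rw [h, LinearMap.trace_eq_contract_apply]
  simp

lemma ricMap_apply_s6 {l : Type*} [LieRing l] [LieAlgebra ℝ l]
    (nab : l →ₗ[ℝ] l →ₗ[ℝ] l) (X Y Z : l) :
    ricMap nab X Y Z = curv nab Z X Y := by
  have h : nab ⁅Z, X⁆ Y = - nab ⁅X, Z⁆ Y := by
    rw [show ⁅Z, X⁆ = -⁅X, Z⁆ by rw [← lie_skew]]; simp only [map_neg, LinearMap.neg_apply]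
  simp only [ricMap, curv, LieAlgebra.ad_apply, LinearMap.add_apply, LinearMap.sub_apply,
    LinearMap.coe_comp, Function.comp_apply, LinearMap.flip_apply, h]
  abel

/-- `X ↦ ric nab X Y` as a linear map. -/
def ricFst {l : Type*} [LieRing l] [LieAlgebra ℝ l] [FiniteDimensional ℝ l]
    (nab : l →ₗ[ℝ] l →ₗ[ℝ] l) (Y : l) : l →ₗ[ℝ] ℝ where
  toFun X := ric nab X Y
  map_add' X₁ X₂ := by
    have : ricMap nab (X₁ + X₂) Y = ricMap nab X₁ Y + ricMap nab X₂ Y := by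
      unfold ricMap
      simp only [map_add, LinearMap.add_apply, LinearMap.add_comp,
        LinearMap.comp_add]
      abel
    simp [ric, this]
  map_smul' c X := by
    have : ricMap nab (c • X) Y = c • ricMap nab X Y := by
      unfold ricMap
      simp only [map_smul, LinearMap.smul_apply, LinearMap.smul_comp,
        LinearMap.comp_smul]
      module
    simp [ric, this]

/-- `Y ↦ ric nab X Y` as a linear map. -/
def ricSnd {l : Type*} [LieRing l] [LieAlgebra ℝ l] [FiniteDimensional ℝ l]
    (nab : l →ₗ[ℝ] l →ₗ[ℝ] l) (X : l) : l →ₗ[ℝ] ℝ where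
  toFun Y := ric nab X Y
  map_add' Y₁ Y₂ := by
    have : ricMap nab X (Y₁ + Y₂) = ricMap nab X Y₁ + ricMap nab X Y₂ := by
      unfold ricMap
      simp only [map_add, LinearMap.add_apply, LinearMap.add_comp, LinearMap.comp_add]
      abel
    simp [ric, this]
  map_smul' c Y := by
    have : ricMap nab X (c • Y) = c • ricMap nab X Y := by
      unfold ricMap
      simp only [map_smul, LinearMap.smul_apply, LinearMap.smul_comp, LinearMap.comp_smul]
      module
    simp [ric, this]

/-- If `∇` is a torsion-free, projectively flat (vanishing Weyl curvature)
bilinear product on `l` (`dim l = n ≥ 2`) and `s` is an autoparallel Lie subalgebra of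
dimension `m ≥ 2`, then the intrinsic Ricci tensor of the induced product satisfies
`Ric^s(X,Y) = (1/(n²−1))·((mn−1)·Ric(X,Y) + (m−n)·Ric(Y,X))` and `P^s(X,Y) = P(X,Y)`. -/
theorem ricci_of_autoparallel_subalgebra
    (l : Type*) [LieRing l] [LieAlgebra ℝ l]
    [FiniteDimensional ℝ l] (hn : 2 ≤ Module.finrank ℝ l)
    (nab : l →ₗ[ℝ] l →ₗ[ℝ] l)
    (tf : ∀ X Y : l, nab X Y - nab Y X = ⁅X, Y⁆)
    (hW : ∀ X Y Z : l, weyl nab X Y Z = 0)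
    (s : LieSubalgebra ℝ l) (hm : 2 ≤ Module.finrank ℝ s)
    (auto : ∀ X Y : l, X ∈ s → Y ∈ s → nab X Y ∈ s)
    (nabS : s →ₗ[ℝ] s →ₗ[ℝ] s)
    (hnabS : ∀ X Y : s, (nabS X Y : l) = nab X Y) :
    ∀ X Y : s,
      ric nabS X Y
        = (1 / ((Module.finrank ℝ l : ℝ) ^ 2 - 1))
          * (((Module.finrank ℝ s : ℝ) * (Module.finrank ℝ l : ℝ) - 1)
              * ric nab (X : l) (Y : l)
            + ((Module.finrank ℝ s : ℝ) - (Module.finrank ℝ l : ℝ))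
              * ric nab (Y : l) (X : l)) ∧
      pT nabS X Y = pT nab (X : l) (Y : l) := by
  set n : ℝ := (Module.finrank ℝ l : ℝ) with hn'
  set m : ℝ := (Module.finrank ℝ s : ℝ) with hm'
  set c : ℝ := 1 / (n ^ 2 - 1) with hc
  -- curvature formula from projective flatness
  have key1 : ∀ A B C : l, curv nab A B C
      = pT nab B C • A - pT nab A C • B - (pT nab A B - pT nab B A) • C := by
    intro A B C
    have h0 := hW A B C
    rw [weyl] at h0
    linear_combination (norm := module) h0
  -- the curvature of the subalgebra, coerced
  have key2 : ∀ X Y Z : s, ((ricMap nabS X Y Z : s) : l) = curv nab (Z : l) (X : l) (Y : l) := by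
    intro X Y Z
    rw [ricMap_apply_s6]
    simp only [curv, AddSubgroupClass.coe_sub, hnabS, LieSubalgebra.coe_bracket]
  -- linear functionals
  set sub : s →ₗ[ℝ] l := (s.toSubmodule).subtype with hsub
  have hsubap : ∀ Z : s, sub Z = (Z : l) := fun Z => rfl
  set pFst : l → (l →ₗ[ℝ] ℝ) := fun Y => (c * n) • ricFst nab Y + c • ricSnd nab Y with hpFst
  set pSnd : l → (l →ₗ[ℝ] ℝ) := fun X => (c * n) • ricSnd nab X + c • ricFst nab X with hpSnd
  have hpFst' : ∀ Y Z : l, pFst Y Z = pT nab Z Y := by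
    intro Y Z
    simp only [hpFst, LinearMap.add_apply, LinearMap.smul_apply, smul_eq_mul, pT, ricFst, ricSnd,
      LinearMap.coe_mk, AddHom.coe_mk, ← hn', ← hc]
    exact (by ring : c * n * ric nab Z Y + c * ric nab Y Z = c * (n * ric nab Z Y + ric nab Y Z))
  have hpSnd' : ∀ X Z : l, pSnd X Z = pT nab X Z := by
    intro X Z
    simp only [hpSnd, LinearMap.add_apply, LinearMap.smul_apply, smul_eq_mul, pT, ricFst, ricSnd,
      LinearMap.coe_mk, AddHom.coe_mk, ← hn', ← hc]
    exact (by ring : c * n * ric nab X Z + c * ric nab Z X = c * (n * ric nab X Z + ric nab Z X))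
  -- the main trace computation
  have key : ∀ X Y : s,
      ric nabS X Y = m * pT nab (X : l) (Y : l) - pT nab (Y : l) (X : l) := by
    intro X Y
    have hE : ricMap nabS X Y
        = pT nab (X : l) (Y : l) • (LinearMap.id : s →ₗ[ℝ] s)
          + ((pSnd (X : l) - pFst (X : l)) ∘ₗ sub).smulRight Y
          - ((pFst (Y : l)) ∘ₗ sub).smulRight X := by
      refine LinearMap.ext fun Z => Subtype.ext ?_
      rw [key2 X Y Z, key1]
      simp only [LinearMap.sub_apply, LinearMap.add_apply, LinearMap.smul_apply,
        LinearMap.id_apply, LinearMap.smulRight_apply, LinearMap.coe_comp, Function.comp_apply,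
        hsubap, AddSubgroupClass.coe_sub, Submodule.coe_add, SetLike.val_smul,
        hpFst', hpSnd']
      show pT nab (X:l) (Y:l) • (Z:l) - pT nab (Z:l) (Y:l) • (X:l) - (pT nab (Z:l) (X:l) - pT nab (X:l) (Z:l)) • (Y:l) = pT nab (X:l) (Y:l) • (Z:l) + (pT nab (X:l) (Z:l) - pT nab (Z:l) (X:l)) • (Y:l) - pT nab (Z:l) (Y:l) • (X:l)
      module
    rw [ric, hE]
    rw [map_sub, map_add, map_smul, LinearMap.trace_id, trace_smulRight', trace_smulRight']
    simp only [LinearMap.sub_apply, LinearMap.coe_comp, Function.comp_apply, hsubap,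
      hpFst', hpSnd', smul_eq_mul, ← hm']
    ring
  intro X Y
  constructor
  · rw [key X Y]
    simp only [pT, ← hn', ← hc]
    ring
  · have hm2 : m ^ 2 - 1 ≠ 0 := by
      have : (2 : ℝ) ≤ m := by rw [hm']; exact_mod_cast hm
      nlinarith
    rw [pT, key X Y, key Y X]
    rw [← hm']
    field_simp
    ring
end
end

section
/- Let n ≥ 2 and let b denote the set of real upper triangular n×n matrices of trace zero (X_{ij} = 0 for i > j, tr X = 0). For X ∈ b and 0 ≤ k ≤ n−1 let X^{(k)} be the matrix with X^{(k)}_{ij} = X_{ij} if j − i = k and 0 otherwise. Define the bilinear product ∇_X Y := Σ_{i ≥ 0, j ≥ 0, i+j > 0} (j/(i+j))·[X^{(i)}, Y^{(j)}], where [A,B] = AB − BA. Then ∇ maps b × b into b, is torsion-free (∇_X Y − ∇_Y X = [X,Y] for all X, Y ∈ b), and its curvature vanishes identically: R(X,Y)Z := ∇_X(∇_Y Z) − ∇_Y(∇_X Z) − ∇_{[X,Y]}Z = 0 for all X, Y, Z ∈ b. -/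
noncomputable section

/-- Membership in `b`: real upper triangular `n×n` matrices of trace zero. -/
def inB {n : ℕ} (X : Matrix (Fin n) (Fin n) ℝ) : Prop :=
  Matrix.trace X = 0 ∧ ∀ i j : Fin n, (j : ℕ) < (i : ℕ) → X i j = 0

/-- The `k`-th superdiagonal component `X^{(k)}` of a matrix `X`. -/
def sd {n : ℕ} (X : Matrix (Fin n) (Fin n) ℝ) (k : ℕ) :
    Matrix (Fin n) (Fin n) ℝ :=
  fun i j => if (j : ℤ) - (i : ℤ) = (k : ℤ) then X i j else 0

/-- The product `∇_X Y := Σ_{i,j ≥ 0, i+j > 0} (j/(i+j))·[X^{(i)}, Y^{(j)}]`. -/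
def nabB (n : ℕ) (X Y : Matrix (Fin n) (Fin n) ℝ) :
    Matrix (Fin n) (Fin n) ℝ :=
  ∑ i ∈ Finset.range n, ∑ j ∈ Finset.range n,
    if 0 < i + j then (((j : ℝ) / ((i : ℝ) + (j : ℝ)))) • ⁅sd X i, sd Y j⁆ else 0

namespace BorelAux

variable {n : ℕ}

/-- The diagonal grading matrix diag(0,1,...,n-1). -/
def Em (n : ℕ) : Matrix (Fin n) (Fin n) ℝ := Matrix.diagonal (fun i => (i : ℝ))

/-- The grading operator: `(Dm M) a b = (b - a) * M a b`. -/
def Dm (M : Matrix (Fin n) (Fin n) ℝ) : Matrix (Fin n) (Fin n) ℝ :=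
  M * Em n - Em n * M

/-- Partial inverse of `Dm`, supported strictly above the diagonal. -/
def Pm (M : Matrix (Fin n) (Fin n) ℝ) : Matrix (Fin n) (Fin n) ℝ :=
  fun a b => if (a : ℕ) < (b : ℕ) then M a b / (((b : ℕ) : ℝ) - ((a : ℕ) : ℝ)) else 0

lemma Dm_apply (M : Matrix (Fin n) (Fin n) ℝ) (a b : Fin n) :
    Dm M a b = (((b : ℕ) : ℝ) - ((a : ℕ) : ℝ)) * M a b := by
  simp [Dm, Em, Matrix.sub_apply, Matrix.mul_diagonal, Matrix.diagonal_mul]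
  ring

/-- Weak upper triangularity. -/
def UTw (M : Matrix (Fin n) (Fin n) ℝ) : Prop :=
  ∀ i j : Fin n, (j : ℕ) < (i : ℕ) → M i j = 0

/-- Strict upper support. -/
def UTs (M : Matrix (Fin n) (Fin n) ℝ) : Prop :=
  ∀ i j : Fin n, (j : ℕ) ≤ (i : ℕ) → M i j = 0

lemma Dm_Pm {M : Matrix (Fin n) (Fin n) ℝ} (h : UTs M) : Dm (Pm M) = M := by
  funext a b
  rw [Dm_apply]
  simp only [Pm]
  split_ifs with hab
  · have hne : ((b : ℕ) : ℝ) - ((a : ℕ) : ℝ) ≠ 0 := by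
      have : ((a : ℕ) : ℝ) < ((b : ℕ) : ℝ) := by exact_mod_cast hab
      linarith
    field_simp
  · rw [h a b (by omega)]; ring

lemma Pm_Dm {M : Matrix (Fin n) (Fin n) ℝ} (h : UTs M) : Pm (Dm M) = M := by
  funext a b
  simp only [Pm, Dm_apply]
  split_ifs with hab
  · have hne : ((b : ℕ) : ℝ) - ((a : ℕ) : ℝ) ≠ 0 := by
      have : ((a : ℕ) : ℝ) < ((b : ℕ) : ℝ) := by exact_mod_cast hab
      linarith
    field_simp
  · rw [h a b (by omega)]

lemma sum_ut {X Y : Matrix (Fin n) (Fin n) ℝ} (hX : UTw X) (hY : UTw Y)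
    {a b : Fin n} (hba : (b : ℕ) ≤ (a : ℕ)) :
    ∑ c, X a c * Y c b = X a a * Y a b := by
  apply Finset.sum_eq_single_of_mem a (Finset.mem_univ a)
  intro c _ hc
  by_cases h1 : (c : ℕ) < (a : ℕ)
  · rw [hX a c h1, zero_mul]
  · have h2 : (b : ℕ) < (c : ℕ) := by
      have : (c : ℕ) ≠ (a : ℕ) := fun h => hc (Fin.ext h)
      omega
    rw [hY c b h2, mul_zero]

lemma UTs_lie {X Y : Matrix (Fin n) (Fin n) ℝ} (hX : UTw X) (hY : UTw Y) :
    UTs ⁅X, Y⁆ := by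
  intro a b hba
  rw [Ring.lie_def, Matrix.sub_apply, Matrix.mul_apply, Matrix.mul_apply,
    sum_ut hX hY hba, sum_ut hY hX hba]
  rcases lt_or_eq_of_le hba with h | h
  · rw [hX a b h, hY a b h]; ring
  · have : b = a := Fin.ext h
    subst this; ring

lemma sd_mul_apply {M N : Matrix (Fin n) (Fin n) ℝ} {k l : ℕ} {a b : Fin n}
    (h : (k : ℤ) + (l : ℤ) ≠ (b : ℤ) - (a : ℤ)) :
    (sd M k * sd N l) a b = 0 := by
  rw [Matrix.mul_apply]
  apply Finset.sum_eq_zero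
  intro c _
  simp only [sd]
  split_ifs with h1 h2
  · exfalso; omega
  · rw [mul_zero]
  · rw [zero_mul]
  · rw [zero_mul]

lemma lie_sd_apply {M N : Matrix (Fin n) (Fin n) ℝ} {k l : ℕ} {a b : Fin n}
    (h : (k : ℤ) + (l : ℤ) ≠ (b : ℤ) - (a : ℤ)) :
    ⁅sd M k, sd N l⁆ a b = 0 := by
  rw [Ring.lie_def, Matrix.sub_apply, sd_mul_apply h, sd_mul_apply (by omega)]
  ring

lemma Pm_lie_sd {M N : Matrix (Fin n) (Fin n) ℝ} {k l : ℕ} (h : 0 < k + l) :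
    Pm ⁅sd M k, sd N l⁆ = (((k : ℝ) + (l : ℝ))⁻¹) • ⁅sd M k, sd N l⁆ := by
  funext a b
  by_cases hd : (k : ℤ) + (l : ℤ) = (b : ℤ) - (a : ℤ)
  · have hab : (a : ℕ) < (b : ℕ) := by omega
    simp only [Pm, Matrix.smul_apply, if_pos hab]
    have hcast : ((b : ℕ) : ℝ) - ((a : ℕ) : ℝ) = (k : ℝ) + (l : ℝ) := by
      have := congrArg (fun z : ℤ => (z : ℝ)) hd
      push_cast at this
      linarith
    rw [hcast, smul_eq_mul, div_eq_inv_mul]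
  · have h0 : ⁅sd M k, sd N l⁆ a b = 0 := lie_sd_apply hd
    simp [Pm, h0]

lemma sum_sd {M : Matrix (Fin n) (Fin n) ℝ} (hM : UTw M) :
    ∑ k ∈ Finset.range n, sd M k = M := by
  funext a b
  rw [Matrix.sum_apply]
  by_cases hab : (b : ℕ) < (a : ℕ)
  · rw [hM a b hab]
    apply Finset.sum_eq_zero
    intro k _
    simp only [sd]
    rw [if_neg (by omega)]
  · have hd : (b : ℕ) - (a : ℕ) ∈ Finset.range n := by
      have := b.isLt
      simp only [Finset.mem_range]
      omega
    rw [Finset.sum_eq_single_of_mem ((b : ℕ) - (a : ℕ)) hd]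
    · simp only [sd]
      rw [if_pos (by omega)]
    · intro k _ hk
      simp only [sd]
      rw [if_neg (by omega)]

lemma Dm_eq_sum {M : Matrix (Fin n) (Fin n) ℝ} (hM : UTw M) :
    Dm M = ∑ j ∈ Finset.range n, (j : ℝ) • sd M j := by
  funext a b
  rw [Dm_apply, Matrix.sum_apply]
  by_cases hab : (b : ℕ) < (a : ℕ)
  · rw [hM a b hab, mul_zero]
    symm
    apply Finset.sum_eq_zero
    intro k _
    simp only [Matrix.smul_apply, sd]
    rw [if_neg (by omega), smul_zero]
  · have hd : (b : ℕ) - (a : ℕ) ∈ Finset.range n := by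
      have := b.isLt
      simp only [Finset.mem_range]
      omega
    rw [Finset.sum_eq_single_of_mem ((b : ℕ) - (a : ℕ)) hd]
    · simp only [Matrix.smul_apply, sd]
      rw [if_pos (by omega), smul_eq_mul]
      congr 1
      have : ((b : ℕ) : ℝ) = ((a : ℕ) : ℝ) + (((b : ℕ) - (a : ℕ) : ℕ) : ℝ) := by
        push_cast [Nat.cast_sub (by omega : (a : ℕ) ≤ (b : ℕ))]
        ring
      rw [this]; ring
    · intro k _ hk
      simp only [Matrix.smul_apply, sd]
      rw [if_neg (by omega), smul_zero]

lemma Pm_add (A B : Matrix (Fin n) (Fin n) ℝ) : Pm (A + B) = Pm A + Pm B := by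
  funext a b
  simp only [Pm, Matrix.add_apply]
  split_ifs with h
  · rw [add_div]
  · rw [add_zero]

lemma Pm_smul (c : ℝ) (A : Matrix (Fin n) (Fin n) ℝ) : Pm (c • A) = c • Pm A := by
  funext a b
  simp only [Pm, Matrix.smul_apply, smul_eq_mul]
  split_ifs with h
  · rw [mul_div_assoc]
  · rw [mul_zero]

lemma Pm_zero : Pm (0 : Matrix (Fin n) (Fin n) ℝ) = 0 := by
  funext a b
  simp [Pm]

lemma Pm_sub (A B : Matrix (Fin n) (Fin n) ℝ) : Pm (A - B) = Pm A - Pm B := by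
  funext a b
  simp only [Pm, Matrix.sub_apply]
  split_ifs with h
  · rw [sub_div]
  · rw [sub_zero]

lemma Pm_sum {ι : Type*} (s : Finset ι) (f : ι → Matrix (Fin n) (Fin n) ℝ) :
    Pm (∑ i ∈ s, f i) = ∑ i ∈ s, Pm (f i) := by
  classical
  induction s using Finset.induction_on with
  | empty => simp [Pm_zero]
  | insert _ _ h ih => rw [Finset.sum_insert h, Finset.sum_insert h, Pm_add, ih]

lemma lie_sum_right {ι : Type*} (A : Matrix (Fin n) (Fin n) ℝ) (s : Finset ι)
    (g : ι → Matrix (Fin n) (Fin n) ℝ) : ⁅A, ∑ j ∈ s, g j⁆ = ∑ j ∈ s, ⁅A, g j⁆ := by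
  classical
  induction s using Finset.induction_on with
  | empty => simp [Ring.lie_def]
  | insert _ _ h ih => rw [Finset.sum_insert h,
    show ∀ x y z : Matrix (Fin n) (Fin n) ℝ, ⁅x, y + z⁆ = ⁅x, y⁆ + ⁅x, z⁆ from
      fun x y z => by simp only [Ring.lie_def, mul_add, add_mul]; abel, ih, Finset.sum_insert h]

lemma lie_sum_left {ι : Type*} (A : Matrix (Fin n) (Fin n) ℝ) (s : Finset ι)
    (g : ι → Matrix (Fin n) (Fin n) ℝ) : ⁅∑ j ∈ s, g j, A⁆ = ∑ j ∈ s, ⁅g j, A⁆ := by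
  classical
  induction s using Finset.induction_on with
  | empty => simp [Ring.lie_def]
  | insert _ _ h ih => rw [Finset.sum_insert h,
    show ∀ x y z : Matrix (Fin n) (Fin n) ℝ, ⁅x + y, z⁆ = ⁅x, z⁆ + ⁅y, z⁆ from
      fun x y z => by simp only [Ring.lie_def, mul_add, add_mul]; abel, ih, Finset.sum_insert h]

/-- The fundamental closed formula: `∇_X Y = P ⁅X, D Y⁆`. -/
lemma nab_eq {X Y : Matrix (Fin n) (Fin n) ℝ} (hX : UTw X) (hY : UTw Y) :
    nabB n X Y = Pm ⁅X, Dm Y⁆ := by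
  conv_rhs => rw [show X = ∑ i ∈ Finset.range n, sd X i from (sum_sd hX).symm,
    Dm_eq_sum hY]
  rw [lie_sum_left]
  simp only [lie_sum_right, lie_smul]
  rw [Pm_sum]
  unfold nabB
  apply Finset.sum_congr rfl
  intro i _
  rw [Pm_sum]
  apply Finset.sum_congr rfl
  intro j _
  rw [show ⁅sd X i, (j : ℝ) • sd Y j⁆ = (j : ℝ) • ⁅sd X i, sd Y j⁆ by
    simp only [Ring.lie_def, mul_smul_comm, smul_mul_assoc, smul_sub], Pm_smul]
  by_cases h : 0 < i + j
  · rw [if_pos h, Pm_lie_sd h, smul_smul, div_eq_mul_inv]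
  · have hj : j = 0 := by omega
    rw [if_neg h, hj]
    simp

lemma UTs_nabB (X Y : Matrix (Fin n) (Fin n) ℝ) : UTs (nabB n X Y) := by
  intro a b hba
  unfold nabB
  rw [Matrix.sum_apply]
  apply Finset.sum_eq_zero
  intro i _
  rw [Matrix.sum_apply]
  apply Finset.sum_eq_zero
  intro j _
  split_ifs with h
  · rw [Matrix.smul_apply, lie_sd_apply (by omega), smul_zero]
  · rfl

lemma inB_nabB (X Y : Matrix (Fin n) (Fin n) ℝ) : inB (nabB n X Y) := by
  constructor
  · rw [Matrix.trace]
    apply Finset.sum_eq_zero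
    intro a _
    exact UTs_nabB X Y a a le_rfl
  · intro i j h
    exact UTs_nabB X Y i j h.le

lemma UTw_Dm {M : Matrix (Fin n) (Fin n) ℝ} (hM : UTw M) : UTw (Dm M) := by
  intro a b h
  rw [Dm_apply, hM a b h, mul_zero]

end BorelAux

open BorelAux in
/-- On the solvable Lie algebra `b` of upper triangular trace-zero
matrices, the product `∇_X Y = Σ (j/(i+j))·[X^{(i)}, Y^{(j)}]` maps `b × b` into `b`,
is torsion-free, and has identically vanishing curvature. -/
theorem borel_flat_connection (n : ℕ) (hn : 2 ≤ n) :
    (∀ X Y : Matrix (Fin n) (Fin n) ℝ, inB X → inB Y → inB (nabB n X Y)) ∧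
    (∀ X Y : Matrix (Fin n) (Fin n) ℝ, inB X → inB Y →
      nabB n X Y - nabB n Y X = ⁅X, Y⁆) ∧
    (∀ X Y Z : Matrix (Fin n) (Fin n) ℝ, inB X → inB Y → inB Z →
      nabB n X (nabB n Y Z) - nabB n Y (nabB n X Z) - nabB n ⁅X, Y⁆ Z = 0) := by
  refine ⟨fun X Y _ _ => inB_nabB X Y, ?_, ?_⟩
  · -- torsion-free
    intro X Y hX hY
    rw [nab_eq hX.2 hY.2, nab_eq hY.2 hX.2, ← Pm_sub]
    have key : ⁅X, Dm Y⁆ - ⁅Y, Dm X⁆ = Dm ⁅X, Y⁆ := by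
      simp only [Ring.lie_def, Dm]
      noncomm_ring
    rw [key, Pm_Dm (UTs_lie hX.2 hY.2)]
  · -- flat
    intro X Y Z hX hY hZ
    have hXYw : BorelAux.UTw ⁅X, Y⁆ := fun i j h => UTs_lie hX.2 hY.2 i j h.le
    have hYZ := inB_nabB (n := n) Y Z
    have hXZ := inB_nabB (n := n) X Z
    rw [nab_eq hX.2 hYZ.2, nab_eq hY.2 hXZ.2, nab_eq hXYw hZ.2,
      nab_eq hY.2 hZ.2, nab_eq hX.2 hZ.2,
      Dm_Pm (UTs_lie hY.2 (UTw_Dm hZ.2)), Dm_Pm (UTs_lie hX.2 (UTw_Dm hZ.2)),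
      ← Pm_sub, ← Pm_sub]
    have jac : ⁅X, ⁅Y, Dm Z⁆⁆ - ⁅Y, ⁅X, Dm Z⁆⁆ - ⁅⁅X, Y⁆, Dm Z⁆ = 0 := by
      simp only [Ring.lie_def]
      noncomm_ring
    rw [jac, Pm_zero]

end
end

section
/- Let n ≥ 2, let b be the real upper triangular trace-zero n×n matrices with the flat product ∇_X Y := Σ_{i ≥ 0, j ≥ 0, i+j > 0} (j/(i+j))·[X^{(i)}, Y^{(j)}]. Fix a subset Λ' ⊆ {1,…,n−1} and define b(i) := #{k : 1 ≤ k < i, k ∉ Λ'} for 1 ≤ i ≤ n. Let a_{Λ'} be the real span of the matrices H^i for i ∈ {1,…,n−1} with i ∉ Λ', and let n_{Λ'} := {X : tr X = 0 and X_{ij} = 0 unless b(i) < b(j)}. Then the subspace s_{Λ'} := a_{Λ'} + n_{Λ'} of b is autoparallel: ∇_X Y ∈ s_{Λ'} for all X, Y ∈ s_{Λ'}. -/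
noncomputable section

/-- The block function `b(i) = #{k : 1 ≤ k < i, k ∉ Λ'}` (here `i : Fin n` is the
0-based index corresponding to the 1-based row index `i+1`). -/
def blk (Λ : Finset ℕ) {n : ℕ} (i : Fin n) : ℕ :=
  ((Finset.Icc 1 (i : ℕ)).filter (fun k => k ∉ Λ)).card

/-- The diagonal matrix `H^i` whose first `i` diagonal entries are `(n−i)/n` and whose
last `n−i` entries are `−i/n`. -/
def Hmat (n i : ℕ) : Matrix (Fin n) (Fin n) ℝ :=
  Matrix.diagonal (fun t : Fin n =>
    if (t : ℕ) < i then ((n : ℝ) - (i : ℝ)) / (n : ℝ) else -(i : ℝ) / (n : ℝ))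

/-- Membership in `a_{Λ'}`: the real span of the `H^i` with `i ∈ {1,…,n−1}`, `i ∉ Λ'`. -/
def inA (n : ℕ) (Λ : Finset ℕ) (X : Matrix (Fin n) (Fin n) ℝ) : Prop :=
  X ∈ Submodule.span ℝ
    {M : Matrix (Fin n) (Fin n) ℝ |
      ∃ i ∈ Finset.Icc 1 (n - 1), i ∉ Λ ∧ M = Hmat n i}

/-- Membership in `n_{Λ'}`: trace-zero matrices with `X_{ij} = 0` unless `b(i) < b(j)`. -/
def inN (n : ℕ) (Λ : Finset ℕ) (X : Matrix (Fin n) (Fin n) ℝ) : Prop :=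
  Matrix.trace X = 0 ∧ ∀ i j : Fin n, ¬ blk Λ i < blk Λ j → X i j = 0

/-- Membership in `s_{Λ'} = a_{Λ'} + n_{Λ'}`. -/
def inS (n : ℕ) (Λ : Finset ℕ) (X : Matrix (Fin n) (Fin n) ℝ) : Prop :=
  ∃ A N : Matrix (Fin n) (Fin n) ℝ, inA n Λ A ∧ inN n Λ N ∧ X = A + N


lemma inA_diag {n : ℕ} {Λ : Finset ℕ} {A : Matrix (Fin n) (Fin n) ℝ}
    (h : inA n Λ A) {p q : Fin n} (hpq : p ≠ q) : A p q = 0 := by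
  induction h using Submodule.span_induction with
  | mem M hM =>
    obtain ⟨i, _, _, rfl⟩ := hM
    simp [Hmat, Matrix.diagonal_apply_ne _ hpq]
  | zero => simp
  | add X Y _ _ hX hY => simp [Matrix.add_apply, hX, hY]
  | smul c X _ hX => simp [Matrix.smul_apply, hX]

lemma sd_zero_diag {n : ℕ} (X : Matrix (Fin n) (Fin n) ℝ) {p q : Fin n}
    (h : p ≠ q) : sd X 0 p q = 0 := by
  unfold sd
  rw [if_neg]
  intro hc
  exact h (Fin.ext (by omega))

lemma supp_sd {n : ℕ} {Λ : Finset ℕ} {X : Matrix (Fin n) (Fin n) ℝ}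
    (hX : inS n Λ X) {k : ℕ} (hk : 1 ≤ k) {p q : Fin n}
    (h : ¬ blk Λ p < blk Λ q) : sd X k p q = 0 := by
  obtain ⟨A, N, hA, hN, rfl⟩ := hX
  unfold sd
  split
  · have hpq : p ≠ q := by
      intro he; subst he; omega
    rw [Matrix.add_apply, inA_diag hA hpq, hN.2 p q h, add_zero]
  · rfl

lemma bracket_entry_zero {n : ℕ} {Λ : Finset ℕ} {P Q : Matrix (Fin n) (Fin n) ℝ}
    (hP : ∀ p q : Fin n, P p q ≠ 0 → blk Λ p < blk Λ q ∨ p = q)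
    (hQ : ∀ p q : Fin n, Q p q ≠ 0 → blk Λ p < blk Λ q)
    {p q : Fin n} (hpq : ¬ blk Λ p < blk Λ q) : ⁅P, Q⁆ p q = 0 := by
  rw [Ring.lie_def, Matrix.sub_apply, Matrix.mul_apply, Matrix.mul_apply]
  have h1 : ∀ r ∈ Finset.univ, P p r * Q r q = 0 := by
    intro r _
    rcases eq_or_ne (P p r) 0 with h | h
    · simp [h]
    · rcases eq_or_ne (Q r q) 0 with h2 | h2
      · simp [h2]
      · rcases hP p r h with h' | rfl
        · exact absurd (h'.trans (hQ r q h2)) hpq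
        · exact absurd (hQ p q h2) hpq
  have h2 : ∀ r ∈ Finset.univ, Q p r * P r q = 0 := by
    intro r _
    rcases eq_or_ne (Q p r) 0 with h | h
    · simp [h]
    · rcases eq_or_ne (P r q) 0 with h2 | h2
      · simp [h2]
      · rcases hP r q h2 with h' | rfl
        · exact absurd ((hQ p r h).trans h') hpq
        · exact absurd (hQ p r h) hpq
  rw [Finset.sum_eq_zero h1, Finset.sum_eq_zero h2, sub_zero]

/-- The subspace `s_{Λ'} = a_{Λ'} + n_{Λ'}` of `b` is autoparallel for the
flat product `∇` on the upper triangular trace-zero matrices. -/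
theorem solvable_autoparallel_in_borel (n : ℕ) (hn : 2 ≤ n)
    (Λ : Finset ℕ) (hΛ : Λ ⊆ Finset.Icc 1 (n - 1)) :
    ∀ X Y : Matrix (Fin n) (Fin n) ℝ, inS n Λ X → inS n Λ Y →
      inS n Λ (nabB n X Y) := by
  intro X Y hX hY
  refine ⟨0, nabB n X Y, Submodule.zero_mem _, ⟨?_, ?_⟩, by simp⟩
  · unfold nabB
    rw [Matrix.trace_sum]
    apply Finset.sum_eq_zero; intro i _
    rw [Matrix.trace_sum]
    apply Finset.sum_eq_zero; intro j _
    split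
    · rw [Matrix.trace_smul, Ring.lie_def, Matrix.trace_sub, Matrix.trace_mul_comm,
        sub_self, smul_zero]
    · simp
  · intro p q hpq
    unfold nabB
    rw [Matrix.sum_apply]
    apply Finset.sum_eq_zero; intro i _
    rw [Matrix.sum_apply]
    apply Finset.sum_eq_zero; intro j _
    split
    · rcases Nat.eq_zero_or_pos j with rfl | hj
      · norm_num
      · rw [Matrix.smul_apply, bracket_entry_zero (Λ := Λ) ?_ ?_ hpq, smul_zero]
        · intro a b hab
          rcases Nat.eq_zero_or_pos i with rfl | hi
          · right
            by_contra hne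
            exact hab (sd_zero_diag X hne)
          · left
            by_contra hlt
            exact hab (supp_sd hX hi hlt)
        · intro a b hab
          by_contra hlt
          exact hab (supp_sd hY hj hlt)
    · rfl


end
end

section
/- Let n ≥ 2 and let Λ' be a proper subset of {1,…,n−1}. Define b(i) := #{k : 1 ≤ k < i, k ∉ Λ'} for 1 ≤ i ≤ n, and let q_{Λ'} := {X ∈ M_n(ℝ) : tr X = 0 and X_{ij} = 0 whenever b(i) > b(j)}. Then q_{Λ'} is autoparallel for the product ∇_X Y := XY − (tr(XY)/n)·I_n on sl(n,ℝ): for all X, Y ∈ q_{Λ'} one has XY − (tr(XY)/n)·I_n ∈ q_{Λ'}. -/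
noncomputable section

/-- Membership in the parabolic subalgebra `q_{Λ'}` of `sl(n,ℝ)`: trace-zero matrices
with `X_{ij} = 0` whenever `b(i) > b(j)`. -/
def inQ (n : ℕ) (Λ : Finset ℕ) (X : Matrix (Fin n) (Fin n) ℝ) : Prop :=
  Matrix.trace X = 0 ∧ ∀ i j : Fin n, blk Λ j < blk Λ i → X i j = 0

/-- For `n ≥ 2` and a proper subset `Λ'` of `{1,…,n−1}`, the parabolic
subalgebra `q_{Λ'}` is autoparallel for the product `∇_X Y = XY − (tr(XY)/n)·I_n`
on `sl(n,ℝ)`. -/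
theorem parabolic_autoparallel_sl_real (n : ℕ) (hn : 2 ≤ n)
    (Λ : Finset ℕ) (hΛ : Λ ⊆ Finset.Icc 1 (n - 1)) (hΛne : Λ ≠ Finset.Icc 1 (n - 1)) :
    ∀ X Y : Matrix (Fin n) (Fin n) ℝ, inQ n Λ X → inQ n Λ Y →
      inQ n Λ (X * Y - (Matrix.trace (X * Y) / (n : ℝ)) • (1 : Matrix (Fin n) (Fin n) ℝ)) := by
  intro X Y ⟨hXtr, hX⟩ ⟨hYtr, hY⟩
  have hn0 : (n : ℝ) ≠ 0 := by positivity
  constructor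
  · simp [Matrix.trace_sub, Matrix.trace_smul, Matrix.trace_one, hn0]
  · intro i j hij
    have hij' : i ≠ j := by rintro rfl; exact lt_irrefl _ hij
    have h1 : (X * Y) i j = 0 := by
      rw [Matrix.mul_apply]
      apply Finset.sum_eq_zero
      intro k _
      rcases lt_or_ge (blk Λ k) (blk Λ i) with h | h
      · rw [hX i k h, zero_mul]
      · rw [hY k j (lt_of_lt_of_le hij h), mul_zero]
    simp [h1, Matrix.one_apply_ne hij']

end
end

section
/- Let n ≥ 2 and let Λ' be a proper subset of {1,…,n−1}. Define b(i) := #{k : 1 ≤ k < i, k ∉ Λ'} for 1 ≤ i ≤ n, and let q_{Λ'} := {X ∈ M_n(ℍ) : Re(tr X) = 0 and X_{ij} = 0 whenever b(i) > b(j)}, where ℍ is the real quaternion algebra. Then q_{Λ'} is autoparallel for the product ∇_X Y := XY − (Re(tr(XY))/n)·I_n on sl(n,ℍ): for all X, Y ∈ q_{Λ'} one has XY − (Re(tr(XY))/n)·I_n ∈ q_{Λ'}. -/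
noncomputable section

/-- Membership in the parabolic subalgebra `q_{Λ'}` of `sl(n,ℍ)`: quaternionic
matrices with `Re(tr X) = 0` and `X_{ij} = 0` whenever `b(i) > b(j)`. -/
def inQH (n : ℕ) (Λ : Finset ℕ) (X : Matrix (Fin n) (Fin n) (Quaternion ℝ)) : Prop :=
  (Matrix.trace X).re = 0 ∧ ∀ i j : Fin n, blk Λ j < blk Λ i → X i j = 0

/-- For `n ≥ 2` and a proper subset `Λ'` of `{1,…,n−1}`, the parabolic
subalgebra `q_{Λ'}` of `sl(n,ℍ)` is autoparallel for the product
`∇_X Y = XY − (Re(tr(XY))/n)·I_n`. -/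
theorem parabolic_autoparallel_sl_quaternion (n : ℕ) (hn : 2 ≤ n)
    (Λ : Finset ℕ) (hΛ : Λ ⊆ Finset.Icc 1 (n - 1)) (hΛne : Λ ≠ Finset.Icc 1 (n - 1)) :
    ∀ X Y : Matrix (Fin n) (Fin n) (Quaternion ℝ), inQH n Λ X → inQH n Λ Y →
      inQH n Λ (X * Y - (((Matrix.trace (X * Y)).re / (n : ℝ)))
        • (1 : Matrix (Fin n) (Fin n) (Quaternion ℝ))) := by
  intro X Y hX hY
  have hn0 : (n : ℝ) ≠ 0 := by positivity
  constructor
  · have htr1 : (Matrix.trace (1 : Matrix (Fin n) (Fin n) (Quaternion ℝ))).re = (n : ℝ) := by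
      simp [Matrix.trace, Matrix.diag]
    rw [Matrix.trace_sub, Matrix.trace_smul]
    simp only [Quaternion.re_sub, Quaternion.re_smul, htr1, smul_eq_mul]
    field_simp
    ring
  · intro i j hij
    have hne : i ≠ j := by rintro rfl; exact lt_irrefl _ hij
    have h1 : ((((Matrix.trace (X * Y)).re / (n : ℝ)))
        • (1 : Matrix (Fin n) (Fin n) (Quaternion ℝ))) i j = 0 := by
      simp [Matrix.one_apply_ne hne]
    rw [Matrix.sub_apply, h1, sub_zero, Matrix.mul_apply]
    apply Finset.sum_eq_zero
    intro k _
    rcases lt_or_ge (blk Λ k) (blk Λ i) with h | h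
    · rw [hX.2 i k h, zero_mul]
    · rw [hY.2 k j (lt_of_lt_of_le hij h), mul_zero]

end
end

section
/- Let n ≥ 2 and Λ' a proper subset of {1,…,n−1}, and let q_{Λ'} ⊆ sl(n,ℝ) be the associated parabolic subalgebra of block upper triangular trace-zero matrices. Then the product ∇_X Y := XY − (tr(XY)/n)·I_n restricted to q_{Λ'} is not flat: there exist X, Y, Z ∈ q_{Λ'} with R(X,Y)Z := ∇_X(∇_Y Z) − ∇_Y(∇_X Z) − ∇_{[X,Y]}Z ≠ 0. (For instance X = E_{12}, Y = Z = H^1 give R(X,Y)Z = −((n−1)/n²)·E_{12}.) -/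
noncomputable section

/-- The product `∇_X Y = XY − (tr(XY)/n)·I_n` on `sl(n,ℝ)`. -/
def nabSL (n : ℕ) (X Y : Matrix (Fin n) (Fin n) ℝ) : Matrix (Fin n) (Fin n) ℝ :=
  X * Y - (Matrix.trace (X * Y) / (n : ℝ)) • (1 : Matrix (Fin n) (Fin n) ℝ)

lemma nabSL_smul_right (n : ℕ) (a : ℝ) (X Y : Matrix (Fin n) (Fin n) ℝ) :
    nabSL n X (a • Y) = a • nabSL n X Y := by
  unfold nabSL
  rw [Matrix.mul_smul, Matrix.trace_smul, smul_sub, smul_smul, smul_eq_mul,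
    mul_div_assoc]

lemma nabSL_smul_left (n : ℕ) (a : ℝ) (X Y : Matrix (Fin n) (Fin n) ℝ) :
    nabSL n (a • X) Y = a • nabSL n X Y := by
  unfold nabSL
  rw [Matrix.smul_mul, Matrix.trace_smul, smul_sub, smul_smul, smul_eq_mul,
    mul_div_assoc]

/-- For `n ≥ 2` and a proper subset `Λ'` of `{1,…,n−1}`, the product
`∇_X Y = XY − (tr(XY)/n)·I_n` restricted to the parabolic subalgebra `q_{Λ'}` is not
flat: some `X, Y, Z ∈ q_{Λ'}` have nonvanishing curvature. -/
theorem parabolic_not_flat_sl_real (n : ℕ) (hn : 2 ≤ n)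
    (Λ : Finset ℕ) (hΛ : Λ ⊆ Finset.Icc 1 (n - 1)) (hΛne : Λ ≠ Finset.Icc 1 (n - 1)) :
    ∃ X Y Z : Matrix (Fin n) (Fin n) ℝ, inQ n Λ X ∧ inQ n Λ Y ∧ inQ n Λ Z ∧
      nabSL n X (nabSL n Y Z) - nabSL n Y (nabSL n X Z) - nabSL n ⁅X, Y⁆ Z ≠ 0 := by
  have hn0 : (n : ℝ) ≠ 0 := by positivity
  set i0 : Fin n := ⟨0, by omega⟩ with hi0
  set i1 : Fin n := ⟨1, by omega⟩ with hi1
  have h01 : i0 ≠ i1 := by simp [hi0, hi1, Fin.ext_iff]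
  set c : ℝ := (n : ℝ)⁻¹ with hc
  set E : Matrix (Fin n) (Fin n) ℝ := Matrix.single i0 i1 1 with hE
  set P : Matrix (Fin n) (Fin n) ℝ := Matrix.single i0 i0 1 with hP
  set H : Matrix (Fin n) (Fin n) ℝ := P - c • 1 with hH
  -- basic products and traces
  have hEP : E * P = 0 := by
    rw [hE, hP, Matrix.single_mul_single_of_ne (h := h01.symm)]
  have hPE : P * E = E := by
    rw [hE, hP, Matrix.single_mul_single_same]; norm_num
  have hPP : P * P = P := by
    rw [hP, Matrix.single_mul_single_same]; norm_num
  have htrE : Matrix.trace E = 0 := Matrix.trace_single_eq_of_ne _ _ _ h01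
  have htrP : Matrix.trace P = 1 := Matrix.trace_single_eq_same _ _
  have htr1 : Matrix.trace (1 : Matrix (Fin n) (Fin n) ℝ) = (n : ℝ) := by
    simp [Matrix.trace_one]
  have hcn : c * (n : ℝ) = 1 := inv_mul_cancel₀ hn0
  -- products with H
  have hEH : E * H = (-c) • E := by
    rw [hH, Matrix.mul_sub, hEP, Matrix.mul_smul, mul_one]
    simp
  have hHE : H * E = (1 - c) • E := by
    rw [hH, Matrix.sub_mul, hPE, Matrix.smul_mul, one_mul, sub_smul, one_smul]
  have hHH : H * H = P - (2 * c) • P + (c * c) • 1 := by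
    rw [hH]
    simp only [Matrix.sub_mul, Matrix.mul_sub, hPP, Matrix.smul_mul, Matrix.mul_smul,
      Matrix.mul_one, Matrix.one_mul, smul_smul]
    module
  -- nabla computations
  have hnEH : nabSL n E H = (-c) • E := by
    rw [nabSL, hEH]
    simp [htrE]
  have hnHE : nabSL n H E = (1 - c) • E := by
    rw [nabSL, hHE]
    simp [htrE]
  have htrHH : Matrix.trace (H * H) = 1 - c := by
    rw [hHH]
    simp only [Matrix.trace_add, Matrix.trace_sub, Matrix.trace_smul, htrP, htr1,
      smul_eq_mul, mul_one, mul_assoc, hcn]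
    ring
  have hnHH : nabSL n H H = (1 - 2 * c) • H := by
    rw [nabSL, htrHH, hHH, hH]
    have h1 : (1 - c) / (n : ℝ) = c - c * c := by
      field_simp [hc]
      linear_combination (c - 1) * hcn
    rw [h1]
    module
  have hbr : ⁅E, H⁆ = (-1 : ℝ) • E := by
    rw [Ring.lie_def, hEH, hHE]
    module
  -- the curvature
  have hcurv : nabSL n E (nabSL n H H) - nabSL n H (nabSL n E H) - nabSL n ⁅E, H⁆ H
      = (c * (c - 1)) • E := by
    rw [hnHH, hnEH, hbr, nabSL_smul_right, nabSL_smul_right, nabSL_smul_left,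
      hnEH, hnHE]
    match_scalars
    ring
  -- membership facts
  have hblk0 : blk Λ i0 = 0 := by
    simp [blk, hi0]
  have hQE : inQ n Λ E := by
    refine ⟨htrE, fun i j hij => ?_⟩
    rw [hE]
    apply Matrix.single_apply_of_ne
    rintro ⟨rfl, rfl⟩
    rw [hblk0] at hij
    exact Nat.not_lt_zero _ hij
  have hQH : inQ n Λ H := by
    constructor
    · rw [hH]
      simp [htrP, htr1, hcn]
    · intro i j hij
      have hne : i ≠ j := by rintro rfl; exact lt_irrefl _ hij
      have hPij : P i j = 0 :=
        Matrix.single_apply_of_ne _ _ _ _ _ (fun h => hne (h.1.symm.trans h.2))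
      rw [hH]
      simp [Matrix.sub_apply, Matrix.smul_apply, hPij, Matrix.one_apply_ne hne]
  refine ⟨E, H, H, hQE, hQH, hQH, ?_⟩
  rw [hcurv]
  intro h
  have hE0 := congrFun (congrFun h i0) i1
  rw [Matrix.smul_apply, hE, Matrix.single_apply_same, Matrix.zero_apply,
    smul_eq_mul, mul_one] at hE0
  have hcpos : 0 < c := by rw [hc]; positivity
  have h2n : (2 : ℝ) ≤ (n : ℝ) := by exact_mod_cast hn
  rcases mul_eq_zero.1 hE0 with h' | h'
  · exact hcpos.ne' h'
  · have hc1 : c = 1 := by linarith [sub_eq_zero.1 h']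
    rw [hc1, one_mul] at hcn
    linarith

end
end

section
/- Let n ≥ 2 and let Λ' = {i_1 < i_2 < ⋯ < i_m} be a proper subset of {1,…,n−1} satisfying i_1 = 1, i_m = n−1, and i_{r+1} − i_r ≤ 2 for all 1 ≤ r ≤ m−1. Let q_{Λ'} ⊆ sl(n,ℝ) be the associated parabolic subalgebra with the induced product ∇_X Y := XY − (tr(XY)/n)·I_n. Then there is NO ℝ-linear functional λ : q_{Λ'} → ℝ such that the modified product ∇^λ_X Y := ∇_X Y + λ(X)·Y + λ(Y)·X has identically vanishing curvature on q_{Λ'}; i.e. ∇ on q_{Λ'} is not projectively equivalent to any left-invariant flat affine connection. -/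
noncomputable section

/-- The projectively modified product `∇^λ_X Y = ∇_X Y + λ(X)·Y + λ(Y)·X`. -/
def nabLam (n : ℕ) (lam : Matrix (Fin n) (Fin n) ℝ →ₗ[ℝ] ℝ)
    (X Y : Matrix (Fin n) (Fin n) ℝ) : Matrix (Fin n) (Fin n) ℝ :=
  nabSL n X Y + lam X • Y + lam Y • X

/-- The condition on `Λ' = {i₁ < i₂ < ⋯ < i_m} ⊆ {1,…,n−1}` that `i₁ = 1`,
`i_m = n−1`, and consecutive elements differ by at most `2`. -/
def denseChain (n : ℕ) (Λ : Finset ℕ) : Prop :=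
  1 ∈ Λ ∧ (n - 1) ∈ Λ ∧ ∀ a ∈ Λ, a ≠ n - 1 → ∃ c ∈ Λ, a < c ∧ c ≤ a + 2

/-- The general curvature formula for the modified product `∇^λ` on trace-zero
matrices: `R^λ(X,Y)Z = g(Y,Z)·X − g(X,Z)·Y − λ([X,Y])·Z` where
`g(A,B) = λ(∇_A B) + λ(A)λ(B) − tr(AB)/n`. -/
lemma curv_formula (n : ℕ) (lam : Matrix (Fin n) (Fin n) ℝ →ₗ[ℝ] ℝ)
    (X Y Z : Matrix (Fin n) (Fin n) ℝ) (hX : Matrix.trace X = 0)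
    (hY : Matrix.trace Y = 0) (hZ : Matrix.trace Z = 0) :
    nabLam n lam X (nabLam n lam Y Z) - nabLam n lam Y (nabLam n lam X Z)
      - nabLam n lam ⁅X, Y⁆ Z
    = (lam (nabSL n Y Z) + lam Y * lam Z - Matrix.trace (Y * Z) / n) • X
      - (lam (nabSL n X Z) + lam X * lam Z - Matrix.trace (X * Z) / n) • Y
      - lam ⁅X, Y⁆ • Z := by
  simp only [nabLam, nabSL, Ring.lie_def, map_add, map_sub, map_smul, smul_eq_mul,
    Matrix.mul_add, Matrix.add_mul, Matrix.mul_sub, Matrix.sub_mul,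
    smul_mul_assoc, mul_smul_comm, Matrix.mul_one, Matrix.one_mul,
    Matrix.trace_add, Matrix.trace_sub, Matrix.trace_smul, Matrix.trace_one,
    hX, hY, hZ, mul_zero, zero_mul, smul_zero, zero_smul, sub_zero, add_zero, zero_add,
    mul_assoc]
  simp only [Matrix.trace_mul_comm Y X]
  module

/-- If `(a:ℕ)+1 ∈ Λ` then the block function does not jump from `a` to `a+1`. -/
lemma blk_step (Λ : Finset ℕ) {n : ℕ} (a b : Fin n) (hab : (b : ℕ) = (a : ℕ) + 1)
    (hmem : (a : ℕ) + 1 ∈ Λ) : blk Λ b = blk Λ a := by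
  unfold blk
  rw [hab, show Finset.Icc 1 ((a:ℕ)+1) = insert ((a:ℕ)+1) (Finset.Icc 1 (a:ℕ)) by
    ext k; simp only [Finset.mem_Icc, Finset.mem_insert]; omega,
    Finset.filter_insert, if_neg (by simp [hmem])]

lemma trace_E {n : ℕ} (i j : Fin n) :
    Matrix.trace (Matrix.single i j (1:ℝ)) = if i = j then 1 else 0 := by
  simp only [Matrix.trace, Matrix.diag, Matrix.single, Matrix.of_apply]
  rcases eq_or_ne i j with rfl | hne
  · rw [Finset.sum_eq_single i (fun x _ hx => if_neg
      (by simp only [and_self]; exact fun h => hx h.symm)) (by simp)]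
    simp
  · rw [Finset.sum_eq_zero (fun x _ => if_neg (by rintro ⟨rfl, rfl⟩; exact hne rfl))]
    simp [hne]

lemma one_eq_sum {n : ℕ} :
    (1 : Matrix (Fin n) (Fin n) ℝ) = ∑ i : Fin n, Matrix.single i i (1:ℝ) := by
  ext a b
  rw [Matrix.sum_apply]
  simp only [Matrix.single, Matrix.one_apply, Matrix.of_apply]
  rcases eq_or_ne a b with rfl | hne
  · rw [Finset.sum_eq_single a (fun x _ hx => if_neg (by simp [fun h : x = a => hx h])) (by simp)]
    simp
  · rw [Finset.sum_eq_zero (fun x _ => if_neg (by rintro ⟨rfl, rfl⟩; exact hne rfl))]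
    simp [hne]

/-- For `n ≥ 2` and a proper subset `Λ' = {i₁ < ⋯ < i_m}` of
`{1,…,n−1}` with `i₁ = 1`, `i_m = n−1` and consecutive gaps at most `2`, there is no
linear functional `λ` making the modified product `∇^λ` flat on the parabolic
subalgebra `q_{Λ'}`: the induced connection on `q_{Λ'}` is not projectively
equivalent to any left-invariant flat affine connection. -/
theorem parabolic_not_projectively_flat_to_flat (n : ℕ) (hn : 2 ≤ n)
    (Λ : Finset ℕ) (hΛ : Λ ⊆ Finset.Icc 1 (n - 1)) (hΛne : Λ ≠ Finset.Icc 1 (n - 1))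
    (hchain : denseChain n Λ) :
    ¬ ∃ lam : Matrix (Fin n) (Fin n) ℝ →ₗ[ℝ] ℝ,
      ∀ X Y Z : Matrix (Fin n) (Fin n) ℝ, inQ n Λ X → inQ n Λ Y → inQ n Λ Z →
        nabLam n lam X (nabLam n lam Y Z) - nabLam n lam Y (nabLam n lam X Z)
          - nabLam n lam ⁅X, Y⁆ Z = 0 := by
  rintro ⟨lam, hflat⟩
  obtain ⟨h1, hlast, hch⟩ := hchain
  have hn0 : (n : ℝ) ≠ 0 := Nat.cast_ne_zero.mpr (by omega)
  -- no two consecutive numbers are both missing from Λ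
  have noadj : ∀ m : ℕ, 1 ≤ m → m + 1 ≤ n - 1 → m ∉ Λ → m + 1 ∈ Λ := by
    intro m hm1 hmn hmΛ
    by_contra hm1Λ
    have h1m : (1:ℕ) < m := lt_of_le_of_ne hm1 (by rintro rfl; exact hmΛ h1)
    have hne : (Λ.filter (· < m)).Nonempty := ⟨1, Finset.mem_filter.mpr ⟨h1, h1m⟩⟩
    set a := (Λ.filter (· < m)).max' hne with ha
    obtain ⟨haΛ, ham⟩ := Finset.mem_filter.mp ((Λ.filter (· < m)).max'_mem hne)
    obtain ⟨c, hcΛ, hac, hca⟩ := hch a haΛ (by omega)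
    rcases (show c < m ∨ c = m ∨ c = m + 1 by omega) with h | h | h
    · exact absurd ((Λ.filter (· < m)).le_max' c (Finset.mem_filter.mpr ⟨hcΛ, h⟩)) (by omega)
    · exact hmΛ (h ▸ hcΛ)
    · exact hm1Λ (h ▸ hcΛ)
  -- every index has a partner in the same block
  have partner : ∀ i : Fin n, ∃ j : Fin n, j ≠ i ∧ blk Λ j = blk Λ i := by
    intro i
    have hin : (i : ℕ) < n := i.isLt
    have step_down : (i : ℕ) ∈ Λ → 1 ≤ (i : ℕ) → ∃ j : Fin n, j ≠ i ∧ blk Λ j = blk Λ i := by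
      intro hiΛ h1i
      refine ⟨⟨(i : ℕ) - 1, by omega⟩, by simp [Fin.ext_iff]; omega, ?_⟩
      exact (blk_step Λ ⟨(i : ℕ) - 1, by omega⟩ i (by simp; omega)
        (by simpa [Nat.sub_add_cancel h1i] using hiΛ)).symm
    rcases lt_or_ge (i : ℕ) (n - 1) with hi | hi
    · by_cases hmem : (i : ℕ) + 1 ∈ Λ
      · exact ⟨⟨(i : ℕ) + 1, by omega⟩, by simp [Fin.ext_iff], blk_step Λ i ⟨(i : ℕ) + 1, by omega⟩ rfl hmem⟩
      · have h1i : 1 ≤ (i : ℕ) := by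
          rcases Nat.eq_zero_or_pos (i : ℕ) with h0 | h; · rw [h0] at hmem; exact absurd h1 hmem
          exact h
        have hiΛ : (i : ℕ) ∈ Λ := by
          by_contra h
          exact hmem (noadj (i : ℕ) h1i (by omega) h)
        exact step_down hiΛ h1i
    · have hieq : (i : ℕ) = n - 1 := by omega
      exact step_down (hieq ▸ hlast) (by omega)
  -- the key identity : lam (E i i) = (lam 1 + 1) / n for every i
  have key : ∀ i : Fin n, lam (Matrix.single i i (1:ℝ)) = (lam 1 + 1) / n := by
    intro i
    obtain ⟨j, hji, hblk⟩ := partner i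
    have hij : i ≠ j := hji.symm
    set X : Matrix (Fin n) (Fin n) ℝ :=
      Matrix.single i i 1 - Matrix.single j j 1 with hXdef
    set Y : Matrix (Fin n) (Fin n) ℝ := Matrix.single i j 1 with hYdef
    set Z : Matrix (Fin n) (Fin n) ℝ := Matrix.single j i 1 with hZdef
    have hXtr : Matrix.trace X = 0 := by
      rw [hXdef, Matrix.trace_sub, trace_E, trace_E]; simp
    have hYtr : Matrix.trace Y = 0 := by rw [hYdef, trace_E, if_neg hij]
    have hZtr : Matrix.trace Z = 0 := by rw [hZdef, trace_E, if_neg hji]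
    have hXQ : inQ n Λ X := by
      refine ⟨hXtr, fun a b hab => ?_⟩
      have hne : a ≠ b := by rintro rfl; exact lt_irrefl _ hab
      have e1 : ¬(i = a ∧ i = b) := fun ⟨h1, h2⟩ => hne (h1 ▸ h2 ▸ rfl)
      have e2 : ¬(j = a ∧ j = b) := fun ⟨h1, h2⟩ => hne (h1 ▸ h2 ▸ rfl)
      rw [hXdef, Matrix.sub_apply, Matrix.single_apply_of_ne i i 1 a b e1,
        Matrix.single_apply_of_ne j j 1 a b e2, sub_zero]
    have hYQ : inQ n Λ Y := by
      refine ⟨hYtr, fun a b hab => ?_⟩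
      have e1 : ¬(i = a ∧ j = b) := by
        rintro ⟨rfl, rfl⟩; rw [hblk] at hab; exact lt_irrefl _ hab
      rw [hYdef]; exact Matrix.single_apply_of_ne i j 1 a b e1
    have hZQ : inQ n Λ Z := by
      refine ⟨hZtr, fun a b hab => ?_⟩
      have e1 : ¬(j = a ∧ i = b) := by
        rintro ⟨rfl, rfl⟩; rw [hblk] at hab; exact lt_irrefl _ hab
      rw [hZdef]; exact Matrix.single_apply_of_ne j i 1 a b e1
    have hcurv := hflat X Y Z hXQ hYQ hZQ
    rw [curv_formula n lam X Y Z hXtr hYtr hZtr] at hcurv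
    -- compute the bracket and the product Y * Z
    have hbr : ⁅X, Y⁆ = Matrix.single i j (1:ℝ) + Matrix.single i j 1 := by
      rw [Ring.lie_def, hXdef, hYdef, Matrix.sub_mul, Matrix.mul_sub,
        Matrix.single_mul_single_same (c := 1) i i j 1,
        Matrix.single_mul_single_of_ne (c := 1) j j i hji 1,
        Matrix.single_mul_single_of_ne (c := 1) i j i hji 1,
        Matrix.single_mul_single_same (c := 1) i j j 1]
      simp only [one_mul, mul_one, sub_zero, zero_sub, sub_neg_eq_add]
    have hYZ : Y * Z = Matrix.single i i (1:ℝ) := by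
      rw [hYdef, hZdef, Matrix.single_mul_single_same (c := 1) i j i 1, mul_one]
    have htrYZ : Matrix.trace (Y * Z) = 1 := by rw [hYZ, trace_E, if_pos rfl]
    -- useful entries
    have hXji : X j i = 0 := by
      have e1 : ¬(i = j ∧ i = i) := fun ⟨h1, _⟩ => hij h1
      have e2 : ¬(j = j ∧ j = i) := fun ⟨_, h2⟩ => hji h2
      rw [hXdef, Matrix.sub_apply, Matrix.single_apply_of_ne i i 1 j i e1,
        Matrix.single_apply_of_ne j j 1 j i e2, sub_zero]
    have hYji : Y j i = 0 := by
      have e1 : ¬(i = j ∧ j = i) := fun ⟨h1, _⟩ => hij h1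
      rw [hYdef]; exact Matrix.single_apply_of_ne i j 1 j i e1
    have hZji : Z j i = 1 := by rw [hZdef]; exact Matrix.single_apply_same j i 1
    have hXii : X i i = 1 := by
      have e2 : ¬(j = i ∧ j = i) := fun ⟨h1, _⟩ => hji h1
      rw [hXdef, Matrix.sub_apply, Matrix.single_apply_same i i 1,
        Matrix.single_apply_of_ne j j 1 i i e2, sub_zero]
    have hYii : Y i i = 0 := by
      have e1 : ¬(i = i ∧ j = i) := fun ⟨_, h2⟩ => hji h2
      rw [hYdef]; exact Matrix.single_apply_of_ne i j 1 i i e1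
    have hZii : Z i i = 0 := by
      have e1 : ¬(j = i ∧ i = i) := fun ⟨h1, _⟩ => hji h1
      rw [hZdef]; exact Matrix.single_apply_of_ne j i 1 i i e1
    -- entry (j, i) shows lam Y = 0
    have e1 := congrFun (congrFun hcurv j) i
    simp only [Matrix.sub_apply, Matrix.smul_apply, Matrix.zero_apply, smul_eq_mul] at e1
    rw [hXji, hYji, hZji, hbr, map_add] at e1
    simp only [mul_zero, mul_one, zero_sub, sub_zero, neg_eq_zero] at e1
    have hlamY : lam (Matrix.single i j (1:ℝ)) = 0 := by linarith [e1]
    -- entry (i, i) gives the key identity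
    have e2 := congrFun (congrFun hcurv i) i
    simp only [Matrix.sub_apply, Matrix.smul_apply, Matrix.zero_apply, smul_eq_mul] at e2
    rw [hXii, hYii, hZii] at e2
    simp only [mul_zero, mul_one, sub_zero] at e2
    have hnab : nabSL n Y Z = Matrix.single i i 1
        - ((1:ℝ) / n) • (1 : Matrix (Fin n) (Fin n) ℝ) := by
      rw [nabSL, hYZ, trace_E, if_pos rfl]
    rw [hnab, map_sub, map_smul, htrYZ, hYdef, hlamY, zero_mul, add_zero, smul_eq_mul] at e2
    field_simp at e2 ⊢
    linarith [e2]
  -- summing over the diagonal yields a contradiction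
  have hsum : lam 1 = ∑ i : Fin n, lam (Matrix.single i i (1:ℝ)) := by
    conv_lhs => rw [one_eq_sum]
    exact map_sum lam _ _
  rw [Finset.sum_congr rfl (fun i _ => key i), Finset.sum_const, Finset.card_univ,
    Fintype.card_fin, nsmul_eq_mul] at hsum
  field_simp at hsum
  linarith

end
end

section
/- Let n ≥ 2 and let Λ' = {i_1 < i_2 < ⋯ < i_m} be a proper subset of {1,…,n−1}, with associated parabolic subalgebra q_{Λ'} ⊆ sl(n,ℝ) and induced product ∇_X Y := XY − (tr(XY)/n)·I_n. Then the following are equivalent: (a) there is no ℝ-linear functional λ : q_{Λ'} → ℝ such that the modified product ∇^λ_X Y := ∇_X Y + λ(X)·Y + λ(Y)·X has identically vanishing curvature on q_{Λ'}; (b) i_1 = 1, i_m = n−1, and i_{r+1} − i_r ≤ 2 for all 1 ≤ r ≤ m−1. -/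
noncomputable section

/-! ### Auxiliary material -/

/-- The fundamental curvature identity for the projectively modified product:
`R^λ(X,Y)Z = B(Y,Z)•X − B(X,Z)•Y − λ([X,Y])•Z` where
`B(X,Z) = λ(XZ) − (tr(XZ)/n)(1+λ(1)) + λ(X)λ(Z)`. -/
lemma curv_eq (n : ℕ) (lam : Matrix (Fin n) (Fin n) ℝ →ₗ[ℝ] ℝ)
    (X Y Z : Matrix (Fin n) (Fin n) ℝ)
    (hX : Matrix.trace X = 0) (hY : Matrix.trace Y = 0) :
    nabLam n lam X (nabLam n lam Y Z) - nabLam n lam Y (nabLam n lam X Z)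
      - nabLam n lam ⁅X, Y⁆ Z
    = (lam (Y*Z) - (Matrix.trace (Y*Z)/(n:ℝ)) * (1 + lam 1) + lam Y * lam Z) • X
      - (lam (X*Z) - (Matrix.trace (X*Z)/(n:ℝ)) * (1 + lam 1) + lam X * lam Z) • Y
      - lam ⁅X, Y⁆ • Z := by
  have hc : Matrix.trace (Y*X) = Matrix.trace (X*Y) := Matrix.trace_mul_comm Y X
  simp only [nabLam, nabSL, Ring.lie_def, Matrix.mul_add, Matrix.mul_sub,
    Matrix.add_mul, Matrix.sub_mul, Matrix.mul_smul, Matrix.smul_mul,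
    mul_one, one_mul, Matrix.trace_add, Matrix.trace_sub, Matrix.trace_smul,
    map_add, map_sub, map_smul, smul_eq_mul, Matrix.mul_assoc, hX, hY, hc,
    mul_zero, zero_mul, add_zero, zero_add, sub_zero, smul_zero, zero_smul]
  match_scalars <;> ring

/-- `blk` as a function of the underlying natural number. -/
def bkn (Λ : Finset ℕ) (v : ℕ) : ℕ :=
  ((Finset.Icc 1 v).filter (fun k => k ∉ Λ)).card

lemma blk_eq_bkn (Λ : Finset ℕ) {n : ℕ} (i : Fin n) : blk Λ i = bkn Λ (i : ℕ) := rfl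

lemma Icc_succ (v : ℕ) : Finset.Icc 1 (v+1) = insert (v+1) (Finset.Icc 1 v) := by
  ext k; simp [Finset.mem_Icc]; omega

lemma bkn_succ_mem (Λ : Finset ℕ) (v : ℕ) (h : v + 1 ∈ Λ) : bkn Λ (v+1) = bkn Λ v := by
  unfold bkn
  rw [Icc_succ, Finset.filter_insert, if_neg (by simp [h])]

lemma bkn_succ_not_mem (Λ : Finset ℕ) (v : ℕ) (h : v + 1 ∉ Λ) :
    bkn Λ (v+1) = bkn Λ v + 1 := by
  unfold bkn
  rw [Icc_succ, Finset.filter_insert, if_pos (by simp [h]),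
    Finset.card_insert_of_notMem (by simp [Finset.mem_Icc])]

lemma bkn_mono (Λ : Finset ℕ) {v w : ℕ} (h : v ≤ w) : bkn Λ v ≤ bkn Λ w :=
  Finset.card_le_card (Finset.filter_subset_filter _ (Finset.Icc_subset_Icc_right h))

/-- If the row `i0` is a singleton block, its `blk`-value is attained only at `i0`. -/
lemma blk_unique {n : ℕ} (Λ : Finset ℕ) (i0 : Fin n)
    (hA : (i0 : ℕ) ∉ Λ ∨ (i0 : ℕ) = 0) (hB : ((i0 : ℕ) + 1) ∉ Λ) :
    ∀ k : Fin n, blk Λ k = blk Λ i0 → k = i0 := by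
  intro k hk
  rcases lt_trichotomy (k : ℕ) (i0 : ℕ) with h | h | h
  · exfalso
    have hi : (i0 : ℕ) ∉ Λ := by
      rcases hA with h' | h'
      · exact h'
      · exact absurd h (by omega)
    have h1 : (i0 : ℕ) = ((i0 : ℕ) - 1) + 1 := by omega
    have h2 : bkn Λ ((i0:ℕ)) = bkn Λ ((i0:ℕ) - 1) + 1 := by
      rw [h1]; exact bkn_succ_not_mem Λ _ (by rw [← h1]; exact hi)
    have h3 : bkn Λ (k : ℕ) ≤ bkn Λ ((i0:ℕ) - 1) := bkn_mono Λ (by omega)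
    rw [blk_eq_bkn, blk_eq_bkn] at hk
    omega
  · exact Fin.ext h
  · exfalso
    have h2 : bkn Λ ((i0:ℕ) + 1) = bkn Λ (i0:ℕ) + 1 := bkn_succ_not_mem Λ _ hB
    have h3 : bkn Λ ((i0:ℕ) + 1) ≤ bkn Λ (k : ℕ) := bkn_mono Λ (by omega)
    rw [blk_eq_bkn, blk_eq_bkn] at hk
    omega

/-- For a singleton block `{i0}`, the `(i0,i0)` entry of a product of two elements
of `q_{Λ'}` is the product of the `(i0,i0)` entries. -/
lemma mul_apply_singleton {n : ℕ} (Λ : Finset ℕ) (i0 : Fin n)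
    (hu : ∀ k : Fin n, blk Λ k = blk Λ i0 → k = i0)
    (X Z : Matrix (Fin n) (Fin n) ℝ) (hX : inQ n Λ X) (hZ : inQ n Λ Z) :
    (X * Z) i0 i0 = X i0 i0 * Z i0 i0 := by
  rw [Matrix.mul_apply]
  apply Finset.sum_eq_single_of_mem i0 (Finset.mem_univ _)
  intro k _ hk
  have hne : blk Λ k ≠ blk Λ i0 := fun h => hk (hu k h)
  rcases Nat.lt_or_ge (blk Λ k) (blk Λ i0) with h | h
  · rw [hX.2 i0 k h, zero_mul]
  · rw [hZ.2 k i0 (lt_of_le_of_ne h (Ne.symm hne)), mul_zero]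

/-- The linear functional `W ↦ −W_{i0 i0}`. -/
def evN {n : ℕ} (i0 : Fin n) : Matrix (Fin n) (Fin n) ℝ →ₗ[ℝ] ℝ where
  toFun W := -(W i0 i0)
  map_add' a b := by simp [Matrix.add_apply]; ring
  map_smul' c a := by simp [Matrix.smul_apply]

@[simp] lemma evN_apply {n : ℕ} (i0 : Fin n) (W : Matrix (Fin n) (Fin n) ℝ) :
    evN i0 W = -(W i0 i0) := rfl

/-- Elementary matrices within a block belong to `q_{Λ'}`. -/
lemma inQ_stdBasis {n : ℕ} (Λ : Finset ℕ) (a b : Fin n) (hab : a ≠ b)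
    (he : blk Λ a = blk Λ b) : inQ n Λ (Matrix.single a b 1) := by
  constructor
  · exact Matrix.trace_single_eq_of_ne a b 1 hab
  · intro i j hij
    apply Matrix.single_apply_of_ne
    rintro ⟨rfl, rfl⟩
    rw [he] at hij
    exact lt_irrefl _ hij

/-- Diagonal difference matrices belong to `q_{Λ'}`. -/
lemma inQ_diag {n : ℕ} (Λ : Finset ℕ) (a b : Fin n) :
    inQ n Λ (Matrix.single a a 1 - Matrix.single b b 1) := by
  constructor
  · rw [Matrix.trace_sub, Matrix.trace_single_eq_same, Matrix.trace_single_eq_same,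
      sub_self]
  · intro i j hij
    have hne : i ≠ j := by rintro rfl; exact lt_irrefl _ hij
    rw [Matrix.sub_apply,
      Matrix.single_apply_of_ne a a 1 i j (by rintro ⟨rfl, rfl⟩; exact hne rfl),
      Matrix.single_apply_of_ne b b 1 i j (by rintro ⟨rfl, rfl⟩; exact hne rfl),
      sub_self]

/-- Under `denseChain`, every index `v ≤ n−1` satisfies `v ∈ Λ ∨ v+1 ∈ Λ`. -/
lemma dense_cover {n : ℕ} {Λ : Finset ℕ} (hd : denseChain n Λ)
    (hΛ : Λ ⊆ Finset.Icc 1 (n - 1)) :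
    ∀ v : ℕ, v ≤ n - 1 → v ∈ Λ ∨ v + 1 ∈ Λ := by
  intro v
  induction v with
  | zero => intro _; right; exact hd.1
  | succ v ih =>
    intro hv
    rcases ih (by omega) with h | h
    · by_cases h1 : v + 1 ∈ Λ
      · exact Or.inl h1
      · by_cases h2 : v + 2 ∈ Λ
        · exact Or.inr h2
        · exfalso
          have hv1 : 1 ≤ v ∧ v ≤ n - 1 := by
            have := hΛ h; simpa [Finset.mem_Icc] using this
          have hvne : v ≠ n - 1 := by omega
          obtain ⟨c, hc, hlt, hle⟩ := hd.2.2 v h hvne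
          have : c = v + 1 ∨ c = v + 2 := by omega
          rcases this with rfl | rfl
          · exact h1 hc
          · exact h2 hc
    · exact Or.inl h

/-- For `n ≥ 2` and a proper subset `Λ' = {i₁ < ⋯ < i_m}` of
`{1,…,n−1}`, the following are equivalent: (a) no linear functional `λ` makes the
modified product `∇^λ_X Y = ∇_X Y + λ(X)·Y + λ(Y)·X` flat on the parabolic
subalgebra `q_{Λ'}` (i.e. the induced connection is not projectively equivalent to
any left-invariant flat affine connection); (b) `i₁ = 1`, `i_m = n−1`, and
`i_{r+1} − i_r ≤ 2` for all consecutive elements. -/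
theorem parabolic_flat_projective_criterion (n : ℕ) (hn : 2 ≤ n)
    (Λ : Finset ℕ) (hΛ : Λ ⊆ Finset.Icc 1 (n - 1)) (hΛne : Λ ≠ Finset.Icc 1 (n - 1)) :
    (¬ ∃ lam : Matrix (Fin n) (Fin n) ℝ →ₗ[ℝ] ℝ,
      ∀ X Y Z : Matrix (Fin n) (Fin n) ℝ, inQ n Λ X → inQ n Λ Y → inQ n Λ Z →
        nabLam n lam X (nabLam n lam Y Z) - nabLam n lam Y (nabLam n lam X Z)
          - nabLam n lam ⁅X, Y⁆ Z = 0) ↔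
    denseChain n Λ := by
  have hnR : (n : ℝ) ≠ 0 := by positivity
  have hnotin : ∀ m : ℕ, n - 1 < m → m ∉ Λ := by
    intro m hm hmem
    have := hΛ hmem
    rw [Finset.mem_Icc] at this
    omega
  constructor
  · -- (a) → (b), by contraposition: if ¬denseChain, construct a flat λ.
    intro hne
    by_contra hnd
    apply hne
    -- find a singleton block row i0
    obtain ⟨i0, hA, hB⟩ : ∃ i0 : Fin n,
        ((i0 : ℕ) ∉ Λ ∨ (i0 : ℕ) = 0) ∧ ((i0 : ℕ) + 1) ∉ Λ := by
      by_cases h1 : 1 ∈ Λ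
      · by_cases h2 : n - 1 ∈ Λ
        · have h3 : ¬ ∀ a ∈ Λ, a ≠ n - 1 → ∃ c ∈ Λ, a < c ∧ c ≤ a + 2 :=
            fun h => hnd ⟨h1, h2, h⟩
          push_neg at h3
          obtain ⟨a, haΛ, hane, hno⟩ := h3
          have hab : 1 ≤ a ∧ a ≤ n - 1 := by
            have := hΛ haΛ; simpa [Finset.mem_Icc] using this
          have ha1 : a + 1 ∉ Λ := fun h => by
            have := hno (a+1) h (by omega); omega
          have ha2 : a + 2 ∉ Λ := fun h => by
            have := hno (a+2) h (by omega); omega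
          exact ⟨⟨a + 1, by omega⟩, Or.inl ha1, ha2⟩
        · refine ⟨⟨n - 1, by omega⟩, Or.inl h2, ?_⟩
          have := hnotin n (by omega)
          simpa [show n - 1 + 1 = n by omega] using this
      · exact ⟨⟨0, by omega⟩, Or.inr rfl, h1⟩
    have hu := blk_unique Λ i0 hA hB
    refine ⟨evN i0, ?_⟩
    intro X Y Z hX hY hZ
    rw [curv_eq n (evN i0) X Y Z hX.1 hY.1]
    have h1 : evN i0 (1 : Matrix (Fin n) (Fin n) ℝ) = -1 := by
      simp [Matrix.one_apply_eq]
    have pYZ := mul_apply_singleton Λ i0 hu Y Z hY hZ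
    have pXZ := mul_apply_singleton Λ i0 hu X Z hX hZ
    have pXY := mul_apply_singleton Λ i0 hu X Y hX hY
    have pYX := mul_apply_singleton Λ i0 hu Y X hY hX
    rw [Ring.lie_def, map_sub]
    simp only [evN_apply, pYZ, pXZ, pXY, pYX, h1]
    ring_nf
    simp
  · -- (b) → (a)
    rintro hd ⟨lam, hf⟩
    have key : ∀ X Y Z : Matrix (Fin n) (Fin n) ℝ, inQ n Λ X → inQ n Λ Y → inQ n Λ Z →
        (lam (Y*Z) - (Matrix.trace (Y*Z)/(n:ℝ)) * (1 + lam 1) + lam Y * lam Z) • X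
          - (lam (X*Z) - (Matrix.trace (X*Z)/(n:ℝ)) * (1 + lam 1) + lam X * lam Z) • Y
          - lam ⁅X, Y⁆ • Z = 0 := by
      intro X Y Z hX hY hZ
      rw [← curv_eq n lam X Y Z hX.1 hY.1]
      exact hf X Y Z hX hY hZ
    -- every row has a partner in the same block
    have partner : ∀ v : Fin n, ∃ w : Fin n, w ≠ v ∧ blk Λ w = blk Λ v := by
      intro v
      rcases dense_cover hd hΛ (v : ℕ) (by omega) with h | h
      · have hv1 : 1 ≤ (v : ℕ) := by
          have := hΛ h; rw [Finset.mem_Icc] at this; omega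
        refine ⟨⟨(v : ℕ) - 1, by omega⟩, ?_, ?_⟩
        · intro hw; apply_fun (fun x => (x : ℕ)) at hw; simp at hw; omega
        · rw [blk_eq_bkn, blk_eq_bkn]
          have h1 : (v : ℕ) = ((v : ℕ) - 1) + 1 := by omega
          conv_rhs => rw [h1]
          exact (bkn_succ_mem Λ _ (by rw [← h1]; exact h)).symm
      · have hv1 : (v : ℕ) + 1 ≤ n - 1 := by
          have := hΛ h; rw [Finset.mem_Icc] at this; omega
        refine ⟨⟨(v : ℕ) + 1, by omega⟩, ?_, ?_⟩
        · intro hw; apply_fun (fun x => (x : ℕ)) at hw; simp at hw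
        · rw [blk_eq_bkn, blk_eq_bkn]
          exact bkn_succ_mem Λ _ h
    -- for every v : lam (E_vv) = (1 + lam 1)/n
    have diag : ∀ v : Fin n,
        lam (Matrix.single v v 1) = (1 + lam 1) / n := by
      intro v
      obtain ⟨w, hwv, hbe⟩ := partner v
      have qvw : inQ n Λ (Matrix.single v w 1) :=
        inQ_stdBasis Λ v w (Ne.symm hwv) hbe.symm
      have qwv : inQ n Λ (Matrix.single w v 1) := inQ_stdBasis Λ w v hwv hbe
      have qD : inQ n Λ (Matrix.single v v 1 - Matrix.single w w 1) :=
        inQ_diag Λ v w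
      have hEE : Matrix.single v w (1:ℝ) * Matrix.single v w 1 = 0 :=
        Matrix.single_mul_single_of_ne (c := (1:ℝ)) v w v hwv 1
      have hvw : Matrix.single v w (1:ℝ) * Matrix.single w v 1
          = Matrix.single v v 1 := by
        rw [Matrix.single_mul_single_same, one_mul]
      have hwvne : ¬(v = w ∧ w = v) := fun h => hwv (h.2)
      have hvvne : ¬(v = v ∧ w = v) := fun h => hwv h.2
      have hwvne2 : ¬(w = v ∧ v = v) := fun h => hwv h.1
      have hwwne : ¬(w = v ∧ w = v) := fun h => hwv h.1
      -- first: lam E_vw = 0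
      have h1 := key (Matrix.single v w 1) (Matrix.single w v 1)
        (Matrix.single v w 1) qvw qwv qvw
      have h1' := congrFun (congrFun h1 w) v
      simp only [Matrix.sub_apply, Matrix.smul_apply, smul_eq_mul, Matrix.zero_apply,
        Matrix.single_apply_of_ne _ _ _ _ _ hwvne, Matrix.single_apply_same,
        hEE, map_zero, Matrix.trace_zero, mul_zero, zero_mul, zero_div, zero_sub, sub_zero,
        zero_add, add_zero, mul_one, neg_eq_zero] at h1'
      have hlvw : lam (Matrix.single v w 1) = 0 := by
        rcases mul_eq_zero.mp h1' with h | h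
        · exact h
        · exact h
      -- second: read the (v,v) entry
      have h2 := key (Matrix.single v w 1)
        (Matrix.single v v 1 - Matrix.single w w 1)
        (Matrix.single w v 1) qvw qD qwv
      have h2' := congrFun (congrFun h2 v) v
      simp only [Matrix.sub_apply, Matrix.smul_apply, smul_eq_mul, Matrix.zero_apply,
        Matrix.single_apply_same,
        Matrix.single_apply_of_ne _ _ _ _ _ hvvne,
        Matrix.single_apply_of_ne _ _ _ _ _ hwvne2,
        Matrix.single_apply_of_ne _ _ _ _ _ hwwne,
        hvw, Matrix.trace_single_eq_same, hlvw, mul_zero, zero_mul,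
        sub_zero, zero_sub, zero_add, add_zero, mul_one, neg_eq_zero] at h2'
      field_simp at h2' ⊢
      linarith
    -- summing over the diagonal gives a contradiction
    have hone : (1 : Matrix (Fin n) (Fin n) ℝ)
        = ∑ v : Fin n, Matrix.single v v 1 := by
      ext i j
      rw [Matrix.sum_apply]
      by_cases h : i = j
      · subst h
        rw [Matrix.one_apply_eq,
          Finset.sum_eq_single_of_mem i (Finset.mem_univ _)
            (fun k _ hk => Matrix.single_apply_of_ne k k 1 i i (fun hc => hk hc.1)),
          Matrix.single_apply_same]
      · rw [Matrix.one_apply_ne h]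
        exact (Finset.sum_eq_zero (fun k _ =>
          Matrix.single_apply_of_ne k k 1 i j
            (fun hc => h (hc.1 ▸ hc.2 ▸ rfl)))).symm
    have hsum : lam 1 = ∑ v : Fin n, lam (Matrix.single v v 1) := by
      rw [hone, map_sum]
    rw [Finset.sum_congr rfl (fun v _ => diag v)] at hsum
    rw [Finset.sum_const, Finset.card_univ, Fintype.card_fin, nsmul_eq_mul] at hsum
    have hns : (n : ℝ) * ((1 + lam 1) / n) = 1 + lam 1 := by field_simp
    rw [hns] at hsum
    linarith
end
end

section
/- Let n ≥ 2 and let Λ' be ANY proper subset of {1,…,n−1}, with associated parabolic subalgebra q_{Λ'} ⊆ sl(n,ℍ) (quaternionic block upper triangular matrices with Re tr = 0) and induced product ∇_X Y := XY − (Re(tr(XY))/n)·I_n. Then there is no ℝ-linear functional λ : q_{Λ'} → ℝ such that the modified product ∇^λ_X Y := ∇_X Y + λ(X)·Y + λ(Y)·X has identically vanishing curvature on q_{Λ'}; i.e. the induced affine connection on any parabolic subalgebra of sl(n,ℍ) is not projectively equivalent to any left-invariant flat affine connection. -/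
noncomputable section

/-- The product `∇_X Y = XY − (Re(tr(XY))/n)·I_n` on `sl(n,ℍ)`. -/
def nabSLH (n : ℕ) (X Y : Matrix (Fin n) (Fin n) (Quaternion ℝ)) :
    Matrix (Fin n) (Fin n) (Quaternion ℝ) :=
  X * Y - ((Matrix.trace (X * Y)).re / (n : ℝ))
    • (1 : Matrix (Fin n) (Fin n) (Quaternion ℝ))

/-- The projectively modified product `∇^λ_X Y = ∇_X Y + λ(X)·Y + λ(Y)·X`. -/
def nabLamH (n : ℕ) (lam : Matrix (Fin n) (Fin n) (Quaternion ℝ) →ₗ[ℝ] ℝ)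
    (X Y : Matrix (Fin n) (Fin n) (Quaternion ℝ)) :
    Matrix (Fin n) (Fin n) (Quaternion ℝ) :=
  nabSLH n X Y + lam X • Y + lam Y • X

namespace ParabolicQuatAux

open Matrix

/-- `re` of a finite sum of quaternions. -/
lemma re_finsum {ι : Type*} (s : Finset ι) (f : ι → Quaternion ℝ) :
    (∑ i ∈ s, f i).re = ∑ i ∈ s, (f i).re := by
  classical
  induction s using Finset.induction with
  | empty => simp; rfl
  | insert _ _ h ih => simp [Finset.sum_insert h, ih]

/-- The real part of the trace of a product of quaternionic matrices is symmetric. -/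
lemma tr_mul_re_comm {n : ℕ} (X Y : Matrix (Fin n) (Fin n) (Quaternion ℝ)) :
    (Matrix.trace (X * Y)).re = (Matrix.trace (Y * X)).re := by
  simp only [Matrix.trace, Matrix.diag, Matrix.mul_apply, re_finsum]
  rw [Finset.sum_comm]
  congr 1; ext i; congr 1; ext k
  simp [Quaternion.re_mul]; ring

/-- The key curvature identity: for `X, Y` with vanishing real trace the curvature of
`∇^λ` collapses to a linear combination of `X`, `Y`, `Z`. -/
lemma key (n : ℕ) (lam : Matrix (Fin n) (Fin n) (Quaternion ℝ) →ₗ[ℝ] ℝ)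
    (X Y Z : Matrix (Fin n) (Fin n) (Quaternion ℝ))
    (hX : (Matrix.trace X).re = 0) (hY : (Matrix.trace Y).re = 0) :
    nabLamH n lam X (nabLamH n lam Y Z) - nabLamH n lam Y (nabLamH n lam X Z)
      - nabLamH n lam ⁅X, Y⁆ Z
    = (lam (nabSLH n Y Z) + lam Y * lam Z - (Matrix.trace (Y*Z)).re / n) • X
      - (lam (nabSLH n X Z) + lam X * lam Z - (Matrix.trace (X*Z)).re / n) • Y
      - lam ⁅X, Y⁆ • Z := by
  have h1 := tr_mul_re_comm Y X
  simp only [nabLamH, nabSLH, Ring.lie_def]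
  simp only [mul_sub, sub_mul, mul_add, add_mul, smul_mul_assoc, mul_smul_comm, mul_one, one_mul,
    Matrix.trace_sub, Matrix.trace_add, Matrix.trace_smul, map_sub, map_add, LinearMap.map_smul,
    Matrix.mul_assoc, smul_sub, smul_add, smul_smul, Matrix.trace_one, hX, hY, h1,
    Quaternion.re_add, Quaternion.re_sub, Quaternion.re_smul, smul_eq_mul, mul_zero, zero_mul,
    sub_zero, zero_sub]
  match_scalars <;> ring

def qi : Quaternion ℝ := ⟨0,1,0,0⟩
def qj : Quaternion ℝ := ⟨0,0,1,0⟩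
def qk : Quaternion ℝ := ⟨0,0,0,1⟩

lemma hij : qi * qj = qk := by
  ext <;> simp [Quaternion.re_mul, Quaternion.imI_mul, Quaternion.imJ_mul,
    Quaternion.imK_mul] <;> simp [qi, qj, qk]
lemma hji : qj * qi = -qk := by
  ext <;> simp [Quaternion.re_mul, Quaternion.imI_mul, Quaternion.imJ_mul,
    Quaternion.imK_mul] <;> simp [qi, qj, qk]
lemma hjk : qj * qk = qi := by
  ext <;> simp [Quaternion.re_mul, Quaternion.imI_mul, Quaternion.imJ_mul,
    Quaternion.imK_mul] <;> simp [qi, qj, qk]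
lemma hkj : qk * qj = -qi := by
  ext <;> simp [Quaternion.re_mul, Quaternion.imI_mul, Quaternion.imJ_mul,
    Quaternion.imK_mul] <;> simp [qi, qj, qk]
lemma hii : qi * qi = -1 := by
  ext <;> simp [Quaternion.re_mul, Quaternion.imI_mul, Quaternion.imJ_mul,
    Quaternion.imK_mul, Quaternion.re_one, Quaternion.imI_one, Quaternion.imJ_one,
    Quaternion.imK_one] <;> simp [qi]

lemma sbm_neg {n : ℕ} (d : Fin n) (a : Quaternion ℝ) :
    Matrix.single d d (-a) = -Matrix.single d d a := by
  rw [← neg_one_smul ℝ a, ← Matrix.smul_single, neg_one_smul]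

/-- Diagonal matrices `q·E_{dd}` with `Re q = 0` lie in every parabolic `q_Λ`. -/
lemma memQH (n : ℕ) (Λ : Finset ℕ) (d : Fin n) (q : Quaternion ℝ) (hq : q.re = 0) :
    inQH n Λ (Matrix.single d d q) := by
  refine ⟨by simp [Matrix.trace_single_eq_same, hq], ?_⟩
  intro i j hlt
  by_cases h : d = i ∧ d = j
  · exact absurd hlt (by rw [← h.1, ← h.2]; exact lt_irrefl _)
  · simp [Matrix.single, h]

lemma trace_re0 {n : ℕ} (d : Fin n) (q : Quaternion ℝ) (hq : q.re = 0) :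
    (Matrix.trace (Matrix.single d d q)).re = 0 := by
  simp [Matrix.trace_single_eq_same, hq]

lemma one_eq_sum (n : ℕ) :
    (1 : Matrix (Fin n) (Fin n) (Quaternion ℝ)) = ∑ d, Matrix.single d d 1 := by
  apply Matrix.ext; intro i j
  simp only [Matrix.sum_apply, Matrix.single, Matrix.of_apply, Matrix.one_apply]
  by_cases h : i = j
  · subst h; simp
  · have he : (Finset.filter (fun x => x = i ∧ x = j) Finset.univ) = ∅ := by
      apply Finset.eq_empty_of_forall_notMem
      intro x hx
      simp only [Finset.mem_filter] at hx
      exact h (hx.2.1.symm.trans hx.2.2)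
    simp [h, he]

end ParabolicQuatAux

open ParabolicQuatAux Matrix in
/-- For `n ≥ 2` and ANY proper subset `Λ'` of `{1,…,n−1}`, there is no
ℝ-linear functional `λ` making the modified product `∇^λ_X Y = ∇_X Y + λ(X)·Y + λ(Y)·X`
flat on the parabolic subalgebra `q_{Λ'}` of `sl(n,ℍ)`: the induced affine connection
on any parabolic subalgebra of `sl(n,ℍ)` is not projectively equivalent to any
left-invariant flat affine connection. -/
theorem parabolic_quaternion_not_projectively_flat_to_flat (n : ℕ) (hn : 2 ≤ n)
    (Λ : Finset ℕ) (hΛ : Λ ⊆ Finset.Icc 1 (n - 1)) (hΛne : Λ ≠ Finset.Icc 1 (n - 1)) :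
    ¬ ∃ lam : Matrix (Fin n) (Fin n) (Quaternion ℝ) →ₗ[ℝ] ℝ,
      ∀ X Y Z : Matrix (Fin n) (Fin n) (Quaternion ℝ),
        inQH n Λ X → inQH n Λ Y → inQH n Λ Z →
          nabLamH n lam X (nabLamH n lam Y Z) - nabLamH n lam Y (nabLamH n lam X Z)
            - nabLamH n lam ⁅X, Y⁆ Z = 0 := by
  rintro ⟨lam, H⟩
  have hn1 : 0 < n := lt_of_lt_of_le (by norm_num) hn
  have hn0 : (n : ℝ) ≠ 0 := Nat.cast_ne_zero.mpr (by omega)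
  set B : Fin n → Quaternion ℝ → Matrix (Fin n) (Fin n) (Quaternion ℝ) :=
    fun d q => Matrix.single d d q with hB
  -- generic consequence of flatness on diagonal one-entry matrices:
  have rhs0 : ∀ (d : Fin n) (x y z : Quaternion ℝ), x.re = 0 → y.re = 0 → z.re = 0 →
      (lam (nabSLH n (B d y) (B d z)) + lam (B d y) * lam (B d z) - (y*z).re / n) • x
      - (lam (nabSLH n (B d x) (B d z)) + lam (B d x) * lam (B d z) - (x*z).re / n) • y
      - lam ⁅B d x, B d y⁆ • z = 0 := by
    intro d x y z hx hy hz
    have h0 := H (B d x) (B d y) (B d z) (memQH n Λ d x hx) (memQH n Λ d y hy)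
      (memQH n Λ d z hz)
    rw [key n lam _ _ _ (trace_re0 d x hx) (trace_re0 d y hy)] at h0
    have h1 := congrFun (congrFun h0 d) d
    simpa [hB, Matrix.sub_apply, Matrix.smul_apply, Matrix.single_apply_same,
      Matrix.single_mul_single_same, Matrix.trace_single_eq_same] using h1
  -- lam applied to nabSLH of two diagonal one-entry matrices
  have lamnab : ∀ (d : Fin n) (p q : Quaternion ℝ),
      lam (nabSLH n (B d p) (B d q)) = lam (B d (p*q)) - ((p*q).re/n) * lam 1 := by
    intro d p q
    simp [nabSLH, hB, Matrix.single_mul_single_same, Matrix.trace_single_eq_same,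
      map_sub, LinearMap.map_smul, smul_eq_mul]
  -- Step A : lam vanishes on the imaginary diagonal units
  have hbrij : ∀ d : Fin n, ⁅B d qi, B d qj⁆ = (2:ℝ) • B d qk := by
    intro d
    rw [Ring.lie_def]
    simp only [hB, Matrix.single_mul_single_same, hij, hji, sbm_neg, sub_neg_eq_add]
    rw [two_smul]
  have hbrjk : ∀ d : Fin n, ⁅B d qj, B d qk⁆ = (2:ℝ) • B d qi := by
    intro d
    rw [Ring.lie_def]
    simp only [hB, Matrix.single_mul_single_same, hjk, hkj, sbm_neg, sub_neg_eq_add]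
    rw [two_smul]
  have lamk : ∀ d : Fin n, lam (B d qk) = 0 := by
    intro d
    have h := rhs0 d qi qj qk rfl rfl rfl
    rw [hbrij d, LinearMap.map_smul] at h
    have h2 := congrArg QuaternionAlgebra.imK h
    simp [Quaternion.re_mul, Quaternion.imI_zero, Quaternion.imK_zero] at h2
    simp [qi, qj, qk] at h2
    exact h2
  have lami : ∀ d : Fin n, lam (B d qi) = 0 := by
    intro d
    have h := rhs0 d qj qk qi rfl rfl rfl
    rw [hbrjk d, LinearMap.map_smul] at h
    have h2 := congrArg QuaternionAlgebra.imI h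
    simp [Quaternion.re_mul, Quaternion.imI_zero, Quaternion.imK_zero] at h2
    simp [qi, qj, qk] at h2
    exact h2
  -- Step B : the value of lam on the real diagonal units
  have hDiag : ∀ d : Fin n, lam (B d (1:Quaternion ℝ)) = lam 1 / n + 1 / n := by
    intro d
    have h := rhs0 d qj qi qi rfl rfl rfl
    rw [lamnab d qi qi, hii] at h
    have hBneg : B d (-1 : Quaternion ℝ) = -(B d (1:Quaternion ℝ)) := sbm_neg d 1
    rw [hBneg, map_neg, lami d] at h
    have h2 := congrArg QuaternionAlgebra.imJ h
    simp [Quaternion.re_mul, Quaternion.imJ_zero, Quaternion.re_one, Quaternion.re_neg] at h2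
    simp [qi, qj, qk] at h2
    field_simp at h2 ⊢
    linarith
  -- Step C : summing over the diagonal yields a contradiction
  have h1 : lam (1 : Matrix (Fin n) (Fin n) (Quaternion ℝ)) = ∑ d, lam (B d 1) := by
    conv_lhs => rw [one_eq_sum n]
    exact map_sum lam _ _
  rw [Finset.sum_congr rfl (fun d _ => hDiag d), Finset.sum_const, Finset.card_univ,
    Fintype.card_fin, nsmul_eq_mul] at h1
  have : (n:ℝ) * (lam 1 / n + 1 / n) = lam 1 + 1 := by field_simp
  rw [this] at h1
  linarith


end
end
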